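/- arXiv:1608.07144 — 8 statements merged into one kernel-verified Lean document; each statement's English description precedes it below -/
import Mathlib

section
/- Let X_p be a weakly p-orderable filter space and let κ = min{|𝒫| : 𝒫 is a nested subfamily of p with ⋂𝒫 = ∅} (this minimum exists since X_p is weakly p-orderable). Then ψ(X_p) ≤ κ ≤ a(X_p). -/
open Set

universe u v w y

/-- The filter space topology on `Option X`: every point `some x` is isolated, and the
neighborhoods of the extra point `none` are the sets `P ∪ {none}` with `P ∈ p`. -/
def filterTop {X : Type u} (p : Filter X) : TopologicalSpace (Option X) where
  IsOpen U := none ∈ U → (Option.some ⁻¹' U) ∈ p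
  isOpen_univ := fun _ => by simp
  isOpen_inter := fun U V hU hV h => by
    rw [Set.preimage_inter]
    exact Filter.inter_mem (hU h.1) (hV h.2)
  isOpen_sUnion := fun S hS h => by
    rw [Set.mem_sUnion] at h
    obtain ⟨U, hUS, hU⟩ := h
    exact Filter.mem_of_superset (hS U hUS hU)
      (Set.preimage_mono (Set.subset_sUnion_of_mem hUS))

/-- A filter is free if `∅ ∉ p` and the intersection of all its members is empty. -/
def IsFree {X : Type u} (p : Filter X) : Prop :=
  (∅ : Set X) ∉ p ∧ ⋂₀ {P : Set X | P ∈ p} = ∅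

/-- A family of sets is nested if any two members are comparable under inclusion. -/
def Nested {X : Type u} (F : Set (Set X)) : Prop :=
  ∀ P ∈ F, ∀ Q ∈ F, P ⊆ Q ∨ Q ⊆ P

/-- The order topology of a linear order: generated by the open rays. -/
def ordTop {Z : Type u} (r : LinearOrder Z) : TopologicalSpace Z :=
  TopologicalSpace.generateFrom
    {S : Set Z | ∃ a : Z, S = {z | r.lt z a} ∨ S = {z | r.lt a z}}

/-- `(Z, t)` is weakly orderable by the linear order `r`: the order topology of `r`
is contained in `t`. -/
def WOBy {Z : Type u} (t : TopologicalSpace Z) (r : LinearOrder Z) : Prop :=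
  ∀ S : Set Z, (ordTop r).IsOpen S → t.IsOpen S

def WeaklyOrderable {Z : Type u} (t : TopologicalSpace Z) : Prop :=
  ∃ r : LinearOrder Z, WOBy t r

/-- Weakly `p`-orderable: weakly orderable by a linear order in which `p` is the maximum. -/
def WeaklyPOrderable {Z : Type u} (t : TopologicalSpace Z) (p : Z) : Prop :=
  ∃ r : LinearOrder Z, WOBy t r ∧ ∀ z : Z, r.le z p

def Orderable {Z : Type u} (t : TopologicalSpace Z) : Prop :=
  ∃ r : LinearOrder Z, ordTop r = t

/-- `p`-orderable: orderable by a linear order in which `p` is the maximum. -/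
def POrderable {Z : Type u} (t : TopologicalSpace Z) (p : Z) : Prop :=
  ∃ r : LinearOrder Z, ordTop r = t ∧ ∀ z : Z, r.le z p

/-- The approaching number of a point `p`: the least cardinality of a set
`A ⊆ Z \ {p}` with `p ∈ closure A`. -/
noncomputable def aNum {Z : Type u} (t : TopologicalSpace Z) (p : Z) : Cardinal.{u} :=
  sInf {c : Cardinal.{u} | ∃ A : Set Z, p ∉ A ∧ p ∈ @closure Z t A ∧ c = Cardinal.mk ↥A}

/-- The pseudo-character of a point `p`: the least cardinality of a family of open sets
whose intersection is `{p}`. -/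
noncomputable def psiNum {Z : Type u} (t : TopologicalSpace Z) (p : Z) : Cardinal.{u} :=
  sInf {c : Cardinal.{u} | ∃ Us : Set (Set Z),
    (∀ V ∈ Us, t.IsOpen V) ∧ ⋂₀ Us = {p} ∧ c = Cardinal.mk ↥Us}

/-- The approaching number of a space: minimum over non-isolated points. -/
noncomputable def aSp {Z : Type u} (t : TopologicalSpace Z) : Cardinal.{u} :=
  sInf {c : Cardinal.{u} | ∃ p : Z, ¬ t.IsOpen ({p} : Set Z) ∧ c = aNum t p}

/-- The pseudo-character of a space: supremum over points. -/
noncomputable def psiSp {Z : Type u} (t : TopologicalSpace Z) : Cardinal.{u} :=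
  ⨆ p : Z, psiNum t p

/-- `‖p‖ = min {|P| : P ∈ p}`. -/
noncomputable def fNorm {X : Type u} (p : Filter X) : Cardinal.{u} :=
  sInf {c : Cardinal.{u} | ∃ P ∈ p, c = Cardinal.mk ↥P}

/-- A selection relation: total and antisymmetric. -/
def SelRel {Z : Type u} (R : Z → Z → Prop) : Prop :=
  (∀ x y : Z, R x y ∨ R y x) ∧ (∀ x y : Z, R x y → R y x → x = y)

/-- Separate continuity of a selection relation: the open rays are open. -/
def SepCont {Z : Type u} (t : TopologicalSpace Z) (R : Z → Z → Prop) : Prop :=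
  ∀ x : Z, t.IsOpen {z | R z x ∧ z ≠ x} ∧ t.IsOpen {z | R x z ∧ x ≠ z}

/-- Continuity of a selection relation (Gutev–Nogura characterization). -/
def ContSel {Z : Type u} (t : TopologicalSpace Z) (R : Z → Z → Prop) : Prop :=
  ∀ x y : Z, R x y → x ≠ y →
    ∃ U V : Set Z, t.IsOpen U ∧ t.IsOpen V ∧ x ∈ U ∧ y ∈ V ∧
      ∀ u ∈ U, ∀ v ∈ V, R u v ∧ u ≠ v

/-- The subspace topology. -/
def subTop {Z : Type u} (t : TopologicalSpace Z) (S : Set Z) : TopologicalSpace ↥S :=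
  TopologicalSpace.induced Subtype.val t

/-- The product topology. -/
def prodTop {A : Type u} {B : Type v} (tA : TopologicalSpace A) (tB : TopologicalSpace B) :
    TopologicalSpace (A × B) :=
  TopologicalSpace.induced Prod.fst tA ⊓ TopologicalSpace.induced Prod.snd tB

/-- `C` is a club (closed unbounded) subset of the ordinal `o`. -/
def Club (o : Ordinal.{u}) (C : Set Ordinal.{u}) : Prop :=
  C ⊆ Set.Iio o ∧ (∀ α < o, ∃ β ∈ C, α ≤ β) ∧
  (∀ α < o, Order.IsSuccLimit α → (∀ β < α, ∃ γ ∈ C, β ≤ γ ∧ γ < α) → α ∈ C)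

/-- `S` is a stationary subset of the ordinal `o`. -/
def StationaryIn (o : Ordinal.{u}) (S : Set Ordinal.{u}) : Prop :=
  S ⊆ Set.Iio o ∧ ∀ C : Set Ordinal.{u}, Club o C → (S ∩ C).Nonempty
/-- If `X_p` is a weakly `p`-orderable filter space and
`κ = min {|𝒫| : 𝒫 nested subfamily of p with ⋂𝒫 = ∅}`, then `ψ(X_p) ≤ κ ≤ a(X_p)`. -/
theorem stmt1 {X : Type u} [Infinite X] (p : Filter X) (hfree : IsFree p)
    (hwo : WeaklyPOrderable (filterTop p) (none : Option X))
    (κ : Cardinal.{u})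
    (hκ : κ = sInf {c : Cardinal.{u} | ∃ F : Set (Set X),
      (∀ P ∈ F, P ∈ p) ∧ Nested F ∧ ⋂₀ F = (∅ : Set X) ∧ c = Cardinal.mk ↥F}) :
    psiNum (filterTop p) (none : Option X) ≤ κ ∧
      κ ≤ aNum (filterTop p) (none : Option X) := by
  classical
  obtain ⟨r, hr, hmax⟩ := hwo
  letI : LinearOrder (Option X) := r
  letI : TopologicalSpace (Option X) := filterTop p
  have hltnone : ∀ a : X, (some a : Option X) < none := fun a =>
    lt_of_le_of_ne (hmax _) (by simp)
  -- rays
  have hRayOpen : ∀ x : Option X, (filterTop p).IsOpen {z : Option X | x < z} := fun x =>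
    hr _ (TopologicalSpace.GenerateOpen.basic _ ⟨x, Or.inr rfl⟩)
  have hRayMem : ∀ a : X, (some ⁻¹' {z : Option X | some a < z}) ∈ p := fun a =>
    hRayOpen (some a) (hltnone a)
  set f : X → Set X := fun a => some ⁻¹' {z : Option X | some a < z} with hf
  have hfnested : ∀ a b : X, f a ⊆ f b ∨ f b ⊆ f a := by
    intro a b
    rcases le_total (some a : Option X) (some b) with h | h
    · exact Or.inr fun x hx => lt_of_le_of_lt h hx
    · exact Or.inl fun x hx => lt_of_le_of_lt h hx
  -- the κ-set is nonempty
  set S := {c : Cardinal.{u} | ∃ F : Set (Set X),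
      (∀ P ∈ F, P ∈ p) ∧ Nested F ∧ ⋂₀ F = (∅ : Set X) ∧ c = Cardinal.mk ↥F} with hS
  have hrange : ∀ (B : Set X), (∀ P ∈ f '' B, P ∈ p) ∧ Nested (f '' B) := by
    intro B
    constructor
    · rintro P ⟨a, -, rfl⟩; exact hRayMem a
    · rintro P ⟨a, -, rfl⟩ Q ⟨b, -, rfl⟩; exact hfnested a b
  have hSne : S.Nonempty := by
    refine ⟨Cardinal.mk ↥(f '' (Set.univ : Set X)), f '' Set.univ,
      (hrange _).1, (hrange _).2, ?_, rfl⟩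
    ext x
    simp only [Set.mem_sInter, Set.mem_empty_iff_false, iff_false, not_forall]
    exact ⟨f x, ⟨x, trivial, rfl⟩, fun hx => lt_irrefl _ hx⟩
  constructor
  · -- ψ ≤ κ
    have hκS : κ ∈ S := hκ ▸ csInf_mem hSne
    obtain ⟨F, hFp, -, hFempty, hFcard⟩ := hκS
    have hFne : F.Nonempty := by
      rcases Set.eq_empty_or_nonempty F with h | h
      · exfalso
        rw [h, Set.sInter_empty] at hFempty
        exact absurd (hFempty ▸ Set.mem_univ (Classical.arbitrary X)) (Set.notMem_empty _)
      · exact h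
    set g : Set X → Set (Option X) := fun P => some '' P ∪ {none} with hg
    have hUsOpen : ∀ V ∈ g '' F, (filterTop p).IsOpen V := by
      rintro V ⟨P, hP, rfl⟩
      intro _
      have : some ⁻¹' (some '' P ∪ {(none : Option X)}) = P := by
        ext x
        simp
      rw [this]
      exact hFp P hP
    have hUsInter : ⋂₀ (g '' F) = ({none} : Set (Option X)) := by
      ext z
      cases z with
      | none =>
        simp only [Set.mem_sInter, Set.mem_singleton_iff]
        exact iff_of_true (by rintro V ⟨P, hP, rfl⟩; exact Or.inr rfl) trivial
      | some x =>
        simp only [Set.mem_sInter, Set.mem_singleton_iff]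
        constructor
        · intro h
          exfalso
          have hx : x ∈ ⋂₀ F := by
            intro P hP
            rcases h (g P) ⟨P, hP, rfl⟩ with h' | h'
            · exact (Option.some_injective X).mem_set_image.mp h'
            · exact absurd h' (by simp)
          rw [hFempty] at hx
          exact hx
        · intro h; exact absurd h (by simp)
    have h1 : psiNum (filterTop p) (none : Option X) ≤ Cardinal.mk ↥(g '' F) := by
      apply csInf_le (OrderBot.bddBelow _)
      exact ⟨g '' F, hUsOpen, hUsInter, rfl⟩
    have h2 : Cardinal.mk ↥(g '' F) ≤ Cardinal.mk ↥F := Cardinal.mk_image_le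
    exact h1.trans (h2.trans_eq hFcard.symm)
  · -- κ ≤ a
    have hTne : {c : Cardinal.{u} | ∃ A : Set (Option X), none ∉ A ∧
        none ∈ @closure (Option X) (filterTop p) A ∧ c = Cardinal.mk ↥A}.Nonempty := by
      refine ⟨Cardinal.mk ↥(Set.range (some : X → Option X)), Set.range some, by simp, ?_, rfl⟩
      rw [mem_closure_iff]
      intro U hU hnU
      have hUp : some ⁻¹' U ∈ p := hU hnU
      have : (some ⁻¹' U).Nonempty := by
        rcases Set.eq_empty_or_nonempty (some ⁻¹' U) with h | h
        · exact absurd (h ▸ hUp) hfree.1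
        · exact h
      obtain ⟨x, hx⟩ := this
      exact ⟨some x, hx, Set.mem_range_self x⟩
    rw [aNum]
    apply le_csInf hTne
    rintro c ⟨A, hnA, hcl, rfl⟩
    set A' : Set X := some ⁻¹' A with hA'
    have hAeq : A = some '' A' := by
      ext z
      cases z with
      | none => simp [hnA]
      | some x => simp [hA']
    have hFin : ⋂₀ (f '' A') = (∅ : Set X) := by
      ext x
      simp only [Set.mem_sInter, Set.mem_empty_iff_false, iff_false, not_forall]
      by_contra hcon
      push_neg at hcon
      have hx : ∀ a ∈ A', (some a : Option X) < some x := fun a ha => hcon (f a) ⟨a, ha, rfl⟩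
      have hopen : (filterTop p).IsOpen {z : Option X | some x < z} := hRayOpen (some x)
      rw [mem_closure_iff] at hcl
      obtain ⟨z, hz1, hz2⟩ := hcl _ hopen (hltnone x)
      cases z with
      | none => exact hnA hz2
      | some a => exact absurd hz1 (not_lt_of_gt (hx a hz2))
    have h1 : κ ≤ Cardinal.mk ↥(f '' A') := by
      rw [hκ]
      exact csInf_le (OrderBot.bddBelow _) ⟨f '' A', (hrange _).1, (hrange _).2, hFin, rfl⟩
    have h2 : Cardinal.mk ↥(f '' A') ≤ Cardinal.mk ↥A' := Cardinal.mk_image_le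
    have h3 : Cardinal.mk ↥A' = Cardinal.mk ↥A := by
      rw [hAeq]
      exact (Cardinal.mk_image_eq (Option.some_injective X)).symm
    exact h1.trans (h2.trans_eq h3)
end

section
/- Let X_p be a filter space such that a(X_p) = ‖p‖ = κ. Then there exists a family {P_α : α < κ} ⊆ p, indexed by the ordinals below κ, such that P_α ⊊ ⋂_{β<α} P_β for every α < κ and ⋂_{α<κ} P_α = ∅. In particular, this family is nested and X_p is weakly p-orderable. -/
open Set

universe u v w y

/-- Key lemma: if `a(X_p) = κ`, then the complement of any set of size `< κ` is in `p`. -/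
lemma key_compl_mem {X : Type u} (p : Filter X) {κ : Cardinal.{u}}
    (ha : aNum (filterTop p) (none : Option X) = κ)
    (S : Set X) (hS : Cardinal.mk S < κ) : Sᶜ ∈ p := by
  by_contra hc
  have hmeet : ∀ P ∈ p, (P ∩ S).Nonempty := by
    intro P hP
    rw [Set.nonempty_iff_ne_empty]
    intro h
    exact hc (Filter.mem_of_superset hP (by
      intro x hx
      simp only [Set.mem_compl_iff]
      intro hxS
      exact absurd h (Set.nonempty_iff_ne_empty.mp ⟨x, hx, hxS⟩)))
  have h1 : (none : Option X) ∉ Option.some '' S := by simp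
  have h2 : (none : Option X) ∈ @closure _ (filterTop p) (Option.some '' S) := by
    letI := filterTop p
    rw [mem_closure_iff]
    intro U hU hU0
    have hUp : Option.some ⁻¹' U ∈ p := hU hU0
    obtain ⟨y, hyP, hyS⟩ := hmeet _ hUp
    exact ⟨Option.some y, hyP, Set.mem_image_of_mem _ hyS⟩
  have hle : κ ≤ Cardinal.mk ↥(Option.some '' S) :=
    ha ▸ csInf_le' ⟨Option.some '' S, h1, h2, rfl⟩
  rw [Cardinal.mk_image_eq (Option.some_injective X)] at hle
  exact absurd hS (not_lt.mpr hle)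

/-- If `X_p` is a filter space with `a(X_p) = ‖p‖ = κ`, then there is a family
`{P_α : α < κ} ⊆ p` with `P_α ⊊ ⋂_{β<α} P_β` for all `α < κ` and `⋂_{α<κ} P_α = ∅`.
In particular this family is nested, and `X_p` is weakly `p`-orderable. -/
theorem stmt2 {X : Type u} [Infinite X] (p : Filter X) (hfree : IsFree p)
    (κ : Cardinal.{u})
    (ha : aNum (filterTop p) (none : Option X) = κ) (hn : fNorm p = κ) :
    (∃ P : Ordinal.{u} → Set X,
      (∀ α < κ.ord, P α ∈ p) ∧
      (∀ α < κ.ord, P α ⊂ ⋂ β ∈ Set.Iio α, P β) ∧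
      ((⋂ α ∈ Set.Iio κ.ord, P α) = (∅ : Set X)) ∧
      (∀ α ∈ Set.Iio κ.ord, ∀ β ∈ Set.Iio κ.ord, P α ⊆ P β ∨ P β ⊆ P α)) ∧
    WeaklyPOrderable (filterTop p) (none : Option X) := by
  classical
  -- obtain a member `Q` of `p` of cardinality `κ`
  have hQex : κ ∈ {c : Cardinal.{u} | ∃ P ∈ p, c = Cardinal.mk ↥P} := by
    rw [← hn]
    exact csInf_mem ⟨Cardinal.mk ↥(Set.univ : Set X), Set.univ, Filter.univ_mem, rfl⟩
  obtain ⟨Q, hQp, hQκ⟩ := hQex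
  -- every point is avoided by some member of `p`
  have havoid : ∀ x : X, ∃ P ∈ p, x ∉ P := by
    intro x
    by_contra h
    push_neg at h
    have : x ∈ ⋂₀ {P : Set X | P ∈ p} := fun P hP => h P hP
    rw [hfree.2] at this
    exact this
  -- `Q` is infinite, hence `κ` is infinite
  have hQinf : Q.Infinite := by
    intro hfin
    choose f hf1 hf2 using havoid
    have hmem : (Q ∩ ⋂ x ∈ Q, f x) ∈ p :=
      Filter.inter_mem hQp ((Filter.biInter_mem hfin).mpr fun x _ => hf1 x)
    have : (Q ∩ ⋂ x ∈ Q, f x) = ∅ := by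
      ext x
      simp only [Set.mem_inter_iff, Set.mem_iInter, Set.mem_empty_iff_false, iff_false]
      rintro ⟨hxQ, hx⟩
      exact hf2 x (hx x hxQ)
    rw [this] at hmem
    exact hfree.1 hmem
  have hκ0 : Cardinal.aleph0 ≤ κ := by
    rw [hQκ]
    exact Cardinal.infinite_iff.mp (Set.infinite_coe_iff.mpr hQinf)
  -- an enumeration of `Q` by the ordinals below `κ.ord`
  have hmkQ : Cardinal.mk ↥Q = Cardinal.mk κ.ord.ToType := by
    rw [Cardinal.mk_toType, Cardinal.card_ord, ← hQκ]
  obtain ⟨e⟩ := Cardinal.eq.mp hmkQ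
  let q : Set.Iio κ.ord ≃ ↥Q := (Ordinal.ToType.mk (o := κ.ord)).toEquiv.trans e.symm
  -- the index function
  let I : X → Ordinal.{u} := fun x => if h : x ∈ Q then (q.symm ⟨x, h⟩ : Set.Iio κ.ord) else 0
  have hord0 : (0 : Ordinal.{u}) < κ.ord := by
    rw [Cardinal.lt_ord, Ordinal.card_zero]
    exact lt_of_lt_of_le Cardinal.aleph0_pos hκ0
  have hI : ∀ x : X, I x < κ.ord := by
    intro x
    by_cases h : x ∈ Q
    · simp only [I, dif_pos h]
      exact (q.symm ⟨x, h⟩).2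
    · simp only [I, dif_neg h]
      exact hord0
  have hIQ : ∀ (x : X) (h : x ∈ Q), I x = (q.symm ⟨x, h⟩ : Set.Iio κ.ord) := by
    intro x h; simp only [I, dif_pos h]
  have hIinj : ∀ x ∈ Q, ∀ y ∈ Q, I x = I y → x = y := by
    intro x hx y hy hxy
    rw [hIQ x hx, hIQ y hy] at hxy
    have := q.symm.injective (Subtype.val_injective hxy)
    exact congrArg Subtype.val this
  have hqI : ∀ a : Set.Iio κ.ord, I (q a : X) = (a : Ordinal) := by
    intro a
    rw [hIQ _ (q a).2]
    congr 1
    rw [show (⟨(q a : X), (q a).2⟩ : ↥Q) = q a from rfl, Equiv.symm_apply_apply]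
  -- the nested family
  set P : Ordinal.{u} → Set X := fun α => {x ∈ Q | α < I x} with hP
  have hPmem : ∀ α < κ.ord, P α ∈ p := by
    intro α hα
    have hsucc : α + 1 < κ.ord := by
      rw [Ordinal.add_one_eq_succ]
      exact (Cardinal.isSuccLimit_ord hκ0).succ_lt hα
    set S : Set X := {x ∈ Q | I x ≤ α} with hS
    have hcard : Cardinal.mk ↥S < κ := by
      have hinj : Function.Injective (fun x : ↥S =>
          Ordinal.ToType.mk (o := α + 1) ⟨I x.1, lt_of_le_of_lt x.2.2 (Order.lt_succ α |>.trans_eq (Ordinal.add_one_eq_succ α).symm)⟩) := by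
        intro x y hxy
        have h1 := (Ordinal.ToType.mk (o := α + 1)).injective hxy
        have h2 : I x.1 = I y.1 := congrArg Subtype.val h1
        exact Subtype.val_injective (hIinj _ x.2.1 _ y.2.1 h2)
      calc Cardinal.mk ↥S ≤ Cardinal.mk (α + 1).ToType := Cardinal.mk_le_of_injective hinj
        _ = (α + 1).card := Cardinal.mk_toType _
        _ < κ := Cardinal.lt_ord.mp hsucc
    have hcomp : Sᶜ ∈ p := key_compl_mem p ha S hcard
    have : P α = Q ∩ Sᶜ := by
      ext x
      simp only [hP, hS, Set.mem_inter_iff, Set.mem_compl_iff, Set.mem_setOf_eq, not_and, not_le]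
      constructor
      · rintro ⟨h1, h2⟩; exact ⟨h1, fun _ => h2⟩
      · rintro ⟨h1, h2⟩; exact ⟨h1, h2 h1⟩
    rw [this]
    exact Filter.inter_mem hQp hcomp
  have hmono : ∀ α β : Ordinal.{u}, α ≤ β → P β ⊆ P α := by
    intro α β hαβ x hx
    exact ⟨hx.1, lt_of_le_of_lt hαβ hx.2⟩
  have hssub : ∀ α < κ.ord, P α ⊂ ⋂ β ∈ Set.Iio α, P β := by
    intro α hα
    constructor
    · intro x hx
      rw [Set.mem_iInter₂]
      intro β hβ
      exact ⟨hx.1, lt_trans hβ hx.2⟩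
    · intro hsub
      have hwit : ((q ⟨α, hα⟩ : X)) ∈ ⋂ β ∈ Set.Iio α, P β := by
        rw [Set.mem_iInter₂]
        intro β hβ
        exact ⟨(q ⟨α, hα⟩ : ↥Q).2, by rw [hqI]; exact hβ⟩
      have := hsub hwit
      rw [hP] at this
      simp only [Set.mem_setOf_eq, hqI] at this
      exact lt_irrefl α this.2
  have hinter : (⋂ α ∈ Set.Iio κ.ord, P α) = (∅ : Set X) := by
    rw [Set.eq_empty_iff_forall_notMem]
    intro x hx
    rw [Set.mem_iInter₂] at hx
    exact lt_irrefl (I x) (hx (I x) (hI x)).2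
  refine ⟨⟨P, hPmem, hssub, hinter, fun α _ β _ => ?_⟩, ?_⟩
  · rcases le_total α β with h | h
    · exact Or.inr (hmono α β h)
    · exact Or.inl (hmono β α h)
  -- weakly p-orderable
  · letI lX : LinearOrder X := LinearOrder.lift'
      (fun x => toLex (I x, embeddingToCardinal x))
      (fun a b h => embeddingToCardinal.injective (congrArg (fun t => (ofLex t).2) h))
    letI lO : LinearOrder (Option X) := WithTop.linearOrder
    have hltX : ∀ a b : X, I a < I b → lX.lt a b := by
      intro a b h
      show toLex (I a, embeddingToCardinal a) < toLex (I b, embeddingToCardinal b)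
      rw [Prod.Lex.lt_iff]
      exact Or.inl h
    refine ⟨lO, ?_, fun z => (@le_top (WithTop X) _ _ z)⟩
    intro S hS
    replace hgen2 := hS
    clear hS
    have hgen : TopologicalSpace.GenerateOpen
        {S : Set (Option X) | ∃ a, S = {z | lO.lt z a} ∨ S = {z | lO.lt a z}} S := hgen2
    clear hgen2
    induction hgen with
    | basic s hs =>
        obtain ⟨a, rfl | rfl⟩ := hs
        · intro hnone
          exact absurd (show (⊤ : WithTop X) < a from hnone) not_top_lt
        · intro hnone
          match a with
          | none => exact absurd (show (⊤ : WithTop X) < ⊤ from hnone) (lt_irrefl _)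
          | some x =>
            show Option.some ⁻¹' {z | lO.lt (some x) z} ∈ p
            refine Filter.mem_of_superset (hPmem (I x) (hI x)) ?_
            intro y hy
            exact (show @LT.lt (WithTop X) _ (some x) (some y) from
              WithTop.coe_lt_coe.mpr (hltX x y hy.2))
    | univ => exact (filterTop p).isOpen_univ
    | inter U V _ _ hU hV => exact (filterTop p).isOpen_inter U V hU hV
    | sUnion T _ hT => exact (filterTop p).isOpen_sUnion T hT
end

section
/- If p is a free ultrafilter on an infinite set X, then every linear order ≤ on X can be extended to a linear order ⪯ on the underlying set X ∪ {p} of the filter space X_p (i.e., the restriction of ⪯ to X equals ≤) such that the order topology generated by ⪯ is coarser than the topology of X_p. -/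
open Set

universe u v w y

/-- If `p` is a free ultrafilter on an infinite set `X`, then every linear
order on `X` extends to a linear order on `X ∪ {p}` whose order topology is coarser than
the topology of the filter space `X_p`. -/
theorem stmt4 {X : Type u} [Infinite X] (p : Ultrafilter X)
    (hfree : IsFree (p : Filter X)) (r : LinearOrder X) :
    ∃ s : LinearOrder (Option X),
      (∀ x y : X, s.le (some x) (some y) ↔ r.le x y) ∧
      WOBy (filterTop (p : Filter X)) s := by
  classical
  letI := r
  -- the cut determined by the ultrafilter
  let L : Set X := {a | {x | a < x} ∈ p}
  have hLdown : ∀ a b : X, a ≤ b → b ∈ L → a ∈ L := fun a b hab hb =>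
    Filter.mem_of_superset hb (fun x hx => lt_of_le_of_lt hab hx)
  have hco : ∀ a : X, {x | x ≠ a} ∈ p := by
    intro a
    by_contra h
    have h1 : {a} ∈ p := by
      have := (Ultrafilter.compl_mem_iff_notMem (s := {x | x ≠ a})).mpr h
      simpa [Set.compl_setOf] using this
    have hall : ∀ P ∈ (p : Filter X), a ∈ P := by
      intro P hP
      by_contra haP
      have hmem : {a} ∩ P ∈ p := Filter.inter_mem h1 hP
      have he : ({a} : Set X) ∩ P = ∅ := by
        ext x; simp only [Set.mem_inter_iff, Set.mem_singleton_iff, Set.mem_empty_iff_false,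
          iff_false, not_and]
        rintro rfl; exact haP
      rw [he] at hmem
      exact hfree.1 hmem
    have hmem : a ∈ ⋂₀ {P : Set X | P ∈ (p : Filter X)} := fun P hP => hall P hP
    rw [hfree.2] at hmem
    exact hmem
  let slt : Option X → Option X → Prop := fun z w =>
    match z, w with
    | some a, some b => a < b
    | some a, none => a ∈ L
    | none, some b => b ∉ L
    | none, none => False
  have hirrefl : ∀ z, ¬ slt z z := by
    rintro (_ | a) h
    · exact h
    · exact lt_irrefl a h
  have htrans : ∀ z w v, slt z w → slt w v → slt z v := by
    rintro (_ | a) (_ | b) (_ | c) h1 h2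
    · exact absurd h1 (hirrefl none)
    · exact absurd h1 (hirrefl none)
    · exact absurd h2 h1
    · exact fun hc => h1 (hLdown b c (le_of_lt h2) hc)
    · exact absurd h2 (hirrefl none)
    · by_contra hac
      exact h2 (hLdown c a (le_of_not_gt hac) h1)
    · exact hLdown a b (le_of_lt h1) h2
    · exact lt_trans h1 h2
  have htri : ∀ z w, slt z w ∨ z = w ∨ slt w z := by
    rintro (_ | a) (_ | b)
    · exact Or.inr (Or.inl rfl)
    · rcases em (b ∈ L) with hb | hb
      · exact Or.inr (Or.inr hb)
      · exact Or.inl hb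
    · rcases em (a ∈ L) with ha | ha
      · exact Or.inl ha
      · exact Or.inr (Or.inr ha)
    · rcases lt_trichotomy a b with h | h | h
      · exact Or.inl h
      · exact Or.inr (Or.inl (congrArg some h))
      · exact Or.inr (Or.inr h)
  haveI hsto : IsStrictTotalOrder (Option X) slt :=
    { trichotomous := fun a b h1 h2 => ((htri a b).resolve_left h1).resolve_right h2
      irrefl := hirrefl
      trans := htrans }
  haveI hdec : DecidableRel slt := fun a b => Classical.dec _
  let s : LinearOrder (Option X) := linearOrderOfSTO slt
  have hslt : ∀ z w, s.lt z w ↔ slt z w := fun _ _ => Iff.rfl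
  have hsle : ∀ z w, s.le z w ↔ (z = w ∨ slt z w) := fun _ _ => Iff.rfl
  refine ⟨s, ?_, ?_⟩
  · intro x y
    rw [hsle]
    constructor
    · rintro (h | h)
      · exact le_of_eq (Option.some.inj h)
      · exact le_of_lt h
    · intro h
      rcases lt_or_eq_of_le h with h | h
      · exact Or.inr h
      · exact Or.inl (congrArg some h)
  · have hle : filterTop (p : Filter X) ≤ ordTop s := by
      apply le_generateFrom (t := filterTop (p : Filter X))
      rintro S ⟨a, rfl | rfl⟩
      · -- S = {z | z < a}
        intro hmem
        have h1 : slt none a := (hslt none a).mp hmem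
        match a, h1 with
        | some a, h1 =>
          have haL : a ∉ L := h1
          have hcompl : {x | a < x}ᶜ ∈ p := Ultrafilter.compl_mem_iff_notMem.mpr haL
          refine Filter.mem_of_superset (Filter.inter_mem hcompl (hco a)) ?_
          rintro x ⟨hx1, hx2⟩
          show s.lt (some x) (some a)
          rw [hslt]
          exact lt_of_le_of_ne (le_of_not_gt hx1) hx2
      · -- S = {z | a < z}
        intro hmem
        have h1 : slt a none := (hslt a none).mp hmem
        match a, h1 with
        | some a, h1 =>
          refine Filter.mem_of_superset h1 ?_
          intro x hx
          show s.lt (some a) (some x)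
          rw [hslt]
          exact hx
    intro S hS
    exact TopologicalSpace.le_def.mp hle S hS
end

section
/- If p is a free ultrafilter on an infinite set X, then the filter space X_p is not suborderable; that is, X_p does not embed homeomorphically into any linearly ordered topological space. -/
open Set

universe u v w y

section Ivl
variable {Y : Type v} [ro : LinearOrder Y]

def ivl (lo hi : Option Y) : Set Y :=
  {z | (∀ a ∈ lo, a < z) ∧ (∀ b ∈ hi, z < b)}

def mOpt (g : Y → Y → Y) : Option Y → Option Y → Option Y
  | none, l => l
  | some a, none => some a
  | some a, some b => some (g a b)

theorem ivl_merge_mem {y : Y} {l₁ h₁ l₂ h₂ : Option Y} (m₁ : y ∈ ivl l₁ h₁)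
    (m₂ : y ∈ ivl l₂ h₂) : y ∈ ivl (mOpt max l₁ l₂) (mOpt min h₁ h₂) := by
  constructor
  · rcases l₁ with _ | a <;> rcases l₂ with _ | b <;>
      simp_all [ivl, mOpt, max_lt_iff]
  · rcases h₁ with _ | a <;> rcases h₂ with _ | b <;>
      simp_all [ivl, mOpt, lt_min_iff]

theorem ivl_merge_sub {l₁ h₁ l₂ h₂ : Option Y} :
    ivl (mOpt max l₁ l₂) (mOpt min h₁ h₂) ⊆ ivl l₁ h₁ ∩ ivl l₂ h₂ := by
  intro z hz
  obtain ⟨hlo, hhi⟩ := hz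
  constructor <;> constructor
  · rcases l₁ with _ | a <;> rcases l₂ with _ | b <;> simp_all [ivl, mOpt, max_lt_iff]
  · rcases h₁ with _ | a <;> rcases h₂ with _ | b <;> simp_all [ivl, mOpt, lt_min_iff]
  · rcases l₁ with _ | a <;> rcases l₂ with _ | b <;> simp_all [ivl, mOpt, max_lt_iff]
  · rcases h₁ with _ | a <;> rcases h₂ with _ | b <;> simp_all [ivl, mOpt, lt_min_iff]

theorem ivl_open (lo hi : Option Y) : (ordTop ro).IsOpen (ivl lo hi) := by
  have hgen : ∀ S, S ∈ {S : Set Y | ∃ a : Y, S = {z | ro.lt z a} ∨ S = {z | ro.lt a z}} →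
      (ordTop ro).IsOpen S := fun S hS => TopologicalSpace.GenerateOpen.basic S hS
  rcases lo with _ | a <;> rcases hi with _ | b
  · have : ivl (none : Option Y) (none : Option Y) = Set.univ := by
      ext z; simp [ivl]
    rw [this]; exact (ordTop ro).isOpen_univ
  · have : ivl (none : Option Y) (some b) = {z | ro.lt z b} := by
      ext z; simp [ivl]
    rw [this]; exact hgen _ ⟨b, Or.inl rfl⟩
  · have : ivl (some a) (none : Option Y) = {z | ro.lt a z} := by
      ext z; simp [ivl]
    rw [this]; exact hgen _ ⟨a, Or.inr rfl⟩
  · have : ivl (some a) (some b) = {z | ro.lt a z} ∩ {z | ro.lt z b} := by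
      ext z; simp [ivl]
    rw [this]
    exact TopologicalSpace.GenerateOpen.inter _ _ (hgen _ ⟨a, Or.inr rfl⟩) (hgen _ ⟨b, Or.inl rfl⟩)

theorem gen_ivl {W : Set Y} (hW : (ordTop ro).IsOpen W) :
    ∀ y ∈ W, ∃ lo hi : Option Y, y ∈ ivl lo hi ∧ ivl lo hi ⊆ W := by
  have h : TopologicalSpace.GenerateOpen
      {S : Set Y | ∃ a : Y, S = {z | ro.lt z a} ∨ S = {z | ro.lt a z}} W := hW
  clear hW
  induction h with
  | basic S hS =>
    intro y hy
    obtain ⟨a, rfl | rfl⟩ := hS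
    · exact ⟨none, some a, by simpa [ivl] using hy, fun z hz => by simpa [ivl] using hz.2 a rfl⟩
    · exact ⟨some a, none, by simpa [ivl] using hy, fun z hz => by simpa [ivl] using hz.1 a rfl⟩
  | univ => exact fun y _ => ⟨none, none, by simp [ivl], fun z _ => trivial⟩
  | inter U V hU hV ihU ihV =>
    intro y hy
    obtain ⟨l₁, h₁, hm₁, hs₁⟩ := ihU y hy.1
    obtain ⟨l₂, h₂, hm₂, hs₂⟩ := ihV y hy.2
    exact ⟨mOpt max l₁ l₂, mOpt min h₁ h₂, ivl_merge_mem hm₁ hm₂,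
      fun z hz => ⟨hs₁ (ivl_merge_sub hz).1, hs₂ (ivl_merge_sub hz).2⟩⟩
  | sUnion S hS ih =>
    intro y hy
    obtain ⟨U, hUS, hyU⟩ := hy
    obtain ⟨lo, hi, hm, hs⟩ := ih U hUS y hyU
    exact ⟨lo, hi, hm, fun z hz => ⟨U, hUS, hs hz⟩⟩

end Ivl

theorem mySplit {α : Type v} [LinearOrder α] (hnm : ∀ u : α, ∃ v : α, u < v) :
    ∃ D : Set α, (∀ u, ∃ v ∈ D, u ≤ v) ∧ (∀ u, ∃ v ∈ Dᶜ, u ≤ v) := by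
  classical
  have wf : WellFounded (@WellOrderingRel α) := IsWellFounded.wf
  set W : Set α := {x | ∀ y, WellOrderingRel y x → y < x} with hWdef
  have hW1 : ∀ u : α, ∃ w ∈ W, u ≤ w := by
    intro u
    have hne : {y | u ≤ y}.Nonempty := ⟨u, le_rfl⟩
    refine ⟨wf.min _ hne, ?_, wf.min_mem _ hne⟩
    intro y hy
    by_contra hlt
    have h1 : u ≤ y := le_trans (wf.min_mem _ hne) (not_lt.mp hlt)
    exact wf.not_lt_min _ h1 hy
  set R : ↥W → ↥W → Prop := fun v w => (v : α) < (w : α) with hRdef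
  have hsub : ∀ v w : ↥W, R v w → WellOrderingRel (v : α) (w : α) := by
    intro v w hvw
    rcases trichotomous_of WellOrderingRel (v : α) (w : α) with h | h | h
    · exact h
    · have hvw' : (v : α) < (w : α) := hvw
      rw [h] at hvw'
      exact absurd hvw' (lt_irrefl _)
    · exact absurd (v.2 _ h) (lt_asymm hvw)
  have hwfR : WellFounded R :=
    Subrelation.wf (fun {v w} h => hsub v w h) (InvImage.wf Subtype.val wf)
  let c : ↥W → Bool := hwfR.fix (fun w ih =>
    if h : ∃ v, R v w ∧ ∀ u : ↥W, R v u → ¬ R u w then !(ih h.choose h.choose_spec.1)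
    else false)
  have hceq : ∀ w, c w = if h : ∃ v, R v w ∧ ∀ u : ↥W, R v u → ¬ R u w
      then !(c h.choose) else false := fun w => hwfR.fix_eq _ w
  have hflip : ∀ w : ↥W, ∃ w' : ↥W, R w w' ∧ c w' = !(c w) := by
    intro w
    obtain ⟨u, hu⟩ := hnm (w : α)
    obtain ⟨w₂, hw₂W, hw₂⟩ := hW1 u
    have hS : {v : ↥W | R w v}.Nonempty := ⟨⟨w₂, hw₂W⟩, lt_of_lt_of_le hu hw₂⟩
    set w' := hwfR.min _ hS with hw'def
    have hmm : R w w' := hwfR.min_mem _ hS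
    have hnl : ∀ u' : ↥W, R w u' → ¬ R u' w' := fun u' hu' => hwfR.not_lt_min _ hu'
    have hcond : ∃ v, R v w' ∧ ∀ u' : ↥W, R v u' → ¬ R u' w' := ⟨w, hmm, hnl⟩
    refine ⟨w', hmm, ?_⟩
    rw [hceq w', dif_pos hcond]
    have hch : hcond.choose = w := by
      obtain ⟨h1, h2⟩ := hcond.choose_spec
      rcases lt_trichotomy (hcond.choose : α) (w : α) with h | h | h
      · exact absurd hmm (h2 w h)
      · exact Subtype.ext h
      · exact absurd h1 (hnl _ h)
    rw [hch]
  refine ⟨{x | ∃ hx : x ∈ W, c ⟨x, hx⟩ = true}, ?_, ?_⟩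
  · intro u
    obtain ⟨w₀, hw₀W, hle⟩ := hW1 u
    by_cases hc : c ⟨w₀, hw₀W⟩ = true
    · exact ⟨w₀, ⟨hw₀W, hc⟩, hle⟩
    · obtain ⟨w', hR', hc'⟩ := hflip ⟨w₀, hw₀W⟩
      have hct : c w' = true := by
        rw [hc', Bool.eq_false_iff.mpr hc]
        rfl
      exact ⟨(w' : α), ⟨w'.2, by simpa using hct⟩, le_trans hle (le_of_lt hR')⟩
  · intro u
    obtain ⟨w₀, hw₀W, hle⟩ := hW1 u
    by_cases hc : c ⟨w₀, hw₀W⟩ = true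
    · obtain ⟨w', hR', hc'⟩ := hflip ⟨w₀, hw₀W⟩
      have hcf : c w' = false := by rw [hc', hc]; rfl
      refine ⟨(w' : α), ?_, le_trans hle (le_of_lt hR')⟩
      rintro ⟨hx, hcx⟩
      have : (⟨(w' : α), hx⟩ : ↥W) = w' := Subtype.ext rfl
      rw [this, hcf] at hcx
      exact Bool.false_ne_true hcx
    · refine ⟨w₀, ?_, hle⟩
      rintro ⟨hx, hcx⟩
      exact hc hcx

theorem mySplitSet {β : Type v} [LinearOrder β] (A : Set β)
    (hnm : ∀ u ∈ A, ∃ v ∈ A, u < v) :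
    ∃ D : Set β, D ⊆ A ∧ (∀ u ∈ A, ∃ v ∈ D, u ≤ v) ∧ (∀ u ∈ A, ∃ v ∈ A \ D, u ≤ v) := by
  obtain ⟨D', h1, h2⟩ := mySplit (α := ↥A)
    (fun u => by
      obtain ⟨v, hv, hlt⟩ := hnm u.1 u.2
      exact ⟨⟨v, hv⟩, hlt⟩)
  refine ⟨Subtype.val '' D', by rintro x ⟨w, _, rfl⟩; exact w.2, ?_, ?_⟩
  · intro u hu
    obtain ⟨v, hvD, hle⟩ := h1 ⟨u, hu⟩
    exact ⟨v.1, ⟨v, hvD, rfl⟩, hle⟩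
  · intro u hu
    obtain ⟨v, hvD, hle⟩ := h2 ⟨u, hu⟩
    refine ⟨v.1, ⟨v.2, ?_⟩, hle⟩
    rintro ⟨w, hwD, hwv⟩
    exact hvD (by rwa [show w = v from Subtype.ext hwv] at hwD)

theorem core {X : Type u} {Y : Type v} [ro : LinearOrder Y] (p : Ultrafilter X)
    (hfree : IsFree (p : Filter X)) (f : Option X → Y) (hinj : Function.Injective f)
    (htop : filterTop (p : Filter X) = TopologicalSpace.induced f (ordTop ro))
    (hA : {x : X | f (some x) < f none} ∈ (p : Filter X)) : False := by
  classical
  have hne : ∀ P ∈ (p : Filter X), P.Nonempty := by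
    intro P hP
    rcases P.eq_empty_or_nonempty with rfl | h
    · exact absurd hP hfree.1
    · exact h
  -- extraction
  have EXT : ∀ P ∈ (p : Filter X), ∃ lo hi : Option Y,
      f none ∈ ivl lo hi ∧ ∀ x : X, f (some x) ∈ ivl lo hi → x ∈ P := by
    intro P hP
    have hSopen : (filterTop (p : Filter X)).IsOpen {o : Option X | ∀ x, o = some x → x ∈ P} := by
      intro _
      have : Option.some ⁻¹' {o : Option X | ∀ x, o = some x → x ∈ P} = P := by
        ext x; simp
      rw [this]; exact hP
    rw [htop] at hSopen
    obtain ⟨W, hWo, hWpre⟩ := hSopen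
    have hyW : f none ∈ W := by
      have : none ∈ f ⁻¹' W := by rw [hWpre]; intro x h; exact absurd h (by simp)
      exact this
    obtain ⟨lo, hi, hm, hs⟩ := gen_ivl hWo (f none) hyW
    refine ⟨lo, hi, hm, fun x hx => ?_⟩
    have : some x ∈ f ⁻¹' W := hs hx
    rw [hWpre] at this
    exact this x rfl
  have MEM : ∀ W : Set Y, (ordTop ro).IsOpen W → f none ∈ W →
      {x : X | f (some x) ∈ W} ∈ (p : Filter X) := by
    intro W hW hy
    have hind : (TopologicalSpace.induced f (ordTop ro)).IsOpen (f ⁻¹' W) := ⟨W, hW, rfl⟩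
    rw [← htop] at hind
    exact hind hy
  -- C1
  have hC1 : ∀ a : Y, a < f none →
      {x : X | a < f (some x) ∧ f (some x) < f none} ∈ (p : Filter X) := by
    intro a ha
    by_contra hnot
    have hcompl : {x : X | a < f (some x) ∧ f (some x) < f none}ᶜ ∈ (p : Filter X) :=
      (Ultrafilter.compl_mem_iff_notMem).mpr hnot
    obtain ⟨lo, hi, hy, htr⟩ := EXT _ hcompl
    have hya : f none ∈ ivl (some a) (none : Option Y) := by
      constructor
      · intro a' ha'; cases ha'; exact ha
      · intro b hb; cases hb
    have hyW : f none ∈ ivl (mOpt max lo (some a)) (mOpt min hi none) := ivl_merge_mem hy hya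
    have hT := MEM _ (ivl_open (mOpt max lo (some a)) (mOpt min hi none)) hyW
    obtain ⟨x, hx1, hx2⟩ := hne _ (Filter.inter_mem hT hA)
    have hsub := ivl_merge_sub (l₁ := lo) (h₁ := hi) (l₂ := some a) (h₂ := none) hx1
    have hxC : x ∈ {x : X | a < f (some x) ∧ f (some x) < f none}ᶜ := htr x hsub.1
    exact hxC ⟨hsub.2.1 a rfl, hx2⟩
  -- no max
  obtain ⟨x₀, hx₀⟩ := hne _ hA
  set AY : Set Y := {y | y < f none ∧ ∃ x : X, f (some x) = y} with hAYdef
  have hnm : ∀ u ∈ AY, ∃ v ∈ AY, u < v := by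
    rintro u ⟨hu, x, rfl⟩
    obtain ⟨x₁, h1, h2⟩ := hne _ (hC1 _ hu)
    exact ⟨f (some x₁), ⟨h2, x₁, rfl⟩, h1⟩
  obtain ⟨D, hDA, hD1, hD2⟩ := mySplitSet AY hnm
  have hx₀AY : f (some x₀) ∈ AY := ⟨hx₀, x₀, rfl⟩
  -- helper to find a point of a given cofinal set inside any interval around f none
  have KEY : ∀ (E : Set Y), E ⊆ AY → (∀ u ∈ AY, ∃ v ∈ E, u ≤ v) →
      ∀ lo hi : Option Y, f none ∈ ivl lo hi → ∃ x : X, f (some x) ∈ ivl lo hi ∧ f (some x) ∈ E := by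
    intro E hEA hcof lo hi hy
    have hbar : ∃ u ∈ AY, ∀ a ∈ lo, a < u := by
      rcases lo with _ | a
      · exact ⟨f (some x₀), hx₀AY, by intro a ha; cases ha⟩
      · have ha : a < f none := hy.1 a rfl
        obtain ⟨xb, hb1, hb2⟩ := hne _ (hC1 a ha)
        exact ⟨f (some xb), ⟨hb2, xb, rfl⟩, by intro a' ha'; cases ha'; exact hb1⟩
    obtain ⟨u, huA, hulo⟩ := hbar
    obtain ⟨v, hvE, huv⟩ := hcof u huA
    obtain ⟨hvlt, x, hxv⟩ := hEA hvE
    refine ⟨x, ⟨?_, ?_⟩, by rw [hxv]; exact hvE⟩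
    · intro a ha; exact lt_of_lt_of_le (hulo a ha) (hxv ▸ huv)
    · intro b hb
      have hb' : f none < b := hy.2 b hb
      exact lt_trans (hxv ▸ hvlt) hb'
  rcases p.mem_or_compl_mem {x : X | f (some x) ∈ D} with hD | hDc
  · obtain ⟨lo, hi, hy, htr⟩ := EXT _ hD
    obtain ⟨x, hxivl, hxE⟩ := KEY (AY \ D) (Set.diff_subset) hD2 lo hi hy
    exact hxE.2 (htr x hxivl)
  · obtain ⟨lo, hi, hy, htr⟩ := EXT _ hDc
    obtain ⟨x, hxivl, hxE⟩ := KEY D hDA hD1 lo hi hy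
    exact (htr x hxivl) hxE


theorem ordTop_dual {Y : Type v} [ro : LinearOrder Y] :
    ordTop (inferInstanceAs (LinearOrder Yᵒᵈ)) = ordTop ro := by
  unfold ordTop
  congr 1
  ext S
  constructor
  · rintro ⟨a, h | h⟩
    · exact ⟨a, Or.inr h⟩
    · exact ⟨a, Or.inl h⟩
  · rintro ⟨a, h | h⟩
    · exact ⟨a, Or.inr h⟩
    · exact ⟨a, Or.inl h⟩


/-- If `p` is a free ultrafilter on an infinite set `X`, then the filter space
`X_p` is not suborderable: it does not embed homeomorphically into any linearly ordered
topological space. -/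
theorem stmt5 {X : Type u} [Infinite X] (p : Ultrafilter X)
    (hfree : IsFree (p : Filter X)) :
    ¬ ∃ (Y : Type v) (r : LinearOrder Y) (f : Option X → Y),
        Function.Injective f ∧
        filterTop (p : Filter X) = TopologicalSpace.induced f (ordTop r) := by
  rintro ⟨Y, r, f, hinj, htop⟩
  letI := r
  have hne : ∀ x : X, f (some x) ≠ f none := by
    intro x h
    exact Option.some_ne_none x (hinj h)
  rcases p.mem_or_compl_mem {x : X | f (some x) < f none} with h | h
  · exact core p hfree f hinj htop h
  · have h' : {x : X | f none < f (some x)} ∈ (p : Filter X) := by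
      refine Filter.mem_of_superset h ?_
      intro x hx
      exact lt_of_le_of_ne (not_lt.mp hx) (hne x).symm
    refine core (Y := Yᵒᵈ) p hfree f hinj ?_ ?_
    · exact htop.trans (congrArg (TopologicalSpace.induced f) (ordTop_dual (ro := r)).symm)
    · exact h'
end

section
/- Let X be a set and κ an infinite cardinal with κ ≤ |X|, and let p^κ = {A ⊆ X : |X \ A| < κ}. Then: (i) a(X_{p^κ}) = κ and ‖p^κ‖ = |X|; (ii) if |X| = κ, then ψ(X_{p^κ}) = cf(κ); (iii) if |X| > κ, then ψ(X_{p^κ}) = |X|. -/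
open Set

universe u v w y

section Stmt6Aux

open Set

private lemma ft_open_elim {X : Type u} (p : Filter X) (U : Set (Option X))
    (h : (filterTop p).IsOpen U) (hn : none ∈ U) : Option.some ⁻¹' U ∈ p := h hn

private lemma ft_open_intro {X : Type u} (p : Filter X) (U : Set (Option X))
    (h : none ∈ U → Option.some ⁻¹' U ∈ p) : (filterTop p).IsOpen U := h

private lemma preim_insert {X : Type u} (B : Set X) :
    Option.some ⁻¹' (insert none (Option.some '' B) : Set (Option X)) = B := by
  ext x
  simp

private lemma mk_preim_eq {X : Type u} (A : Set (Option X)) (hA : none ∉ A) :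
    Cardinal.mk ↥A = Cardinal.mk ↥(Option.some ⁻¹' A) := by
  have himg : Option.some '' (Option.some ⁻¹' A) = A := by
    ext a
    cases a with
    | none => simp [hA]
    | some x => simp
  conv_lhs => rw [← himg]
  exact Cardinal.mk_image_eq (Option.some_injective X)

private lemma closure_char {X : Type u} {κ : Cardinal.{u}} {p : Filter X}
    (hp : ∀ A : Set X, A ∈ p ↔ Cardinal.mk ↥(Aᶜ) < κ)
    (A : Set (Option X)) (hA : none ∉ A) :
    none ∈ @closure _ (filterTop p) A ↔ κ ≤ Cardinal.mk ↥(Option.some ⁻¹' A) := by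
  letI t := filterTop p
  rw [mem_closure_iff]
  constructor
  · intro h
    by_contra hlt
    push_neg at hlt
    have hUopen : IsOpen (insert none (Option.some '' (Option.some ⁻¹' A)ᶜ) : Set (Option X)) := by
      refine ft_open_intro p _ (fun _ => ?_)
      rw [preim_insert, hp, compl_compl]
      exact hlt
    obtain ⟨a, haU, haA⟩ := h _ hUopen (Set.mem_insert _ _)
    cases a with
    | none => exact hA haA
    | some x =>
      rcases Set.mem_insert_iff.1 haU with h1 | h2
      · exact nomatch h1
      · obtain ⟨y, hy, hyx⟩ := h2
        cases Option.some_injective X hyx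
        exact hy haA
  · intro hge U hU hnU
    have hP : Option.some ⁻¹' U ∈ p := ft_open_elim p U hU hnU
    rw [hp] at hP
    have hns : ¬ (Option.some ⁻¹' A ⊆ (Option.some ⁻¹' U)ᶜ) := by
      intro hsub
      exact absurd (le_trans hge (Cardinal.mk_le_mk_of_subset hsub)) (not_le.2 hP)
    obtain ⟨x, hxA, hxU⟩ := Set.not_subset.1 hns
    exact ⟨Option.some x, by simpa using hxU, hxA⟩

end Stmt6Aux

/-- For an infinite cardinal `κ ≤ |X|` and the filter
`p^κ = {A ⊆ X : |X \ A| < κ}`: (i) `a(X_{p^κ}) = κ` and `‖p^κ‖ = |X|`;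
(ii) if `|X| = κ` then `ψ(X_{p^κ}) = cf(κ)`; (iii) if `|X| > κ` then `ψ(X_{p^κ}) = |X|`. -/
theorem stmt6 {X : Type u} (κ : Cardinal.{u}) (hκ : Cardinal.aleph0 ≤ κ)
    (hκX : κ ≤ Cardinal.mk X)
    (p : Filter X) (hp : ∀ A : Set X, A ∈ p ↔ Cardinal.mk ↥(Aᶜ) < κ) :
    aNum (filterTop p) (none : Option X) = κ ∧
    fNorm p = Cardinal.mk X ∧
    (Cardinal.mk X = κ → psiNum (filterTop p) (none : Option X) = κ.ord.cof) ∧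
    (κ < Cardinal.mk X → psiNum (filterTop p) (none : Option X) = Cardinal.mk X) := by
  have hX0 : Cardinal.aleph0 ≤ Cardinal.mk X := hκ.trans hκX
  have hκpos : (0 : Cardinal.{u}) < κ := lt_of_lt_of_le Cardinal.aleph0_pos hκ
  -- Part (i), approaching number
  have haNum : aNum (filterTop p) (none : Option X) = κ := by
    obtain ⟨B, hB⟩ := Cardinal.le_mk_iff_exists_set.1 hκX
    have hnim : (none : Option X) ∉ Option.some '' B := by
      rintro ⟨y, -, hy⟩; exact nomatch hy
    have hmem : κ ∈ {c : Cardinal.{u} | ∃ A : Set (Option X), none ∉ A ∧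
        none ∈ @closure _ (filterTop p) A ∧ c = Cardinal.mk ↥A} := by
      refine ⟨Option.some '' B, hnim, ?_, ?_⟩
      · rw [closure_char hp _ hnim, Set.preimage_image_eq _ (Option.some_injective X), hB]
      · rw [Cardinal.mk_image_eq (Option.some_injective X), hB]
    unfold aNum
    refine le_antisymm (csInf_le' hmem) (le_csInf ⟨κ, hmem⟩ ?_)
    rintro c ⟨A, hA, hcl, rfl⟩
    rw [closure_char hp _ hA] at hcl
    rw [mk_preim_eq A hA]
    exact hcl
  -- Part (i), norm
  have hfNorm : fNorm p = Cardinal.mk X := by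
    have hmem : Cardinal.mk X ∈ {c : Cardinal.{u} | ∃ P ∈ p, c = Cardinal.mk ↥P} := by
      refine ⟨Set.univ, ?_, by rw [Cardinal.mk_univ]⟩
      rw [hp, Set.compl_univ]
      simpa using hκpos
    unfold fNorm
    refine le_antisymm (csInf_le' hmem) (le_csInf ⟨_, hmem⟩ ?_)
    rintro c ⟨P, hP, rfl⟩
    by_contra hlt
    push_neg at hlt
    rw [hp] at hP
    have hle : Cardinal.mk X ≤ Cardinal.mk ↥P + Cardinal.mk ↥(Pᶜ) := by
      have h := Cardinal.mk_union_le P Pᶜ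
      rwa [Set.union_compl_self, Cardinal.mk_univ] at h
    exact absurd hle (not_le.2 (Cardinal.add_lt_of_lt hX0 hlt (hP.trans_le hκX)))
  -- Shared lower-bound machinery for the pseudocharacter
  have hlow : ∀ Us : Set (Set (Option X)),
      (∀ V ∈ Us, (filterTop p).IsOpen V) → ⋂₀ Us = {none} →
      (Cardinal.mk X ≤ Cardinal.mk ↥Us *
        ⨆ V : ↥Us, Cardinal.mk ↥((Option.some ⁻¹' (V : Set (Option X)))ᶜ)) ∧
      (∀ V : ↥Us, Cardinal.mk ↥((Option.some ⁻¹' (V : Set (Option X)))ᶜ) < κ) := by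
    intro Us hopen hint
    have hnone : ∀ V ∈ Us, (none : Option X) ∈ V := by
      intro V hV
      have h : (none : Option X) ∈ ⋂₀ Us := by rw [hint]; rfl
      exact h V hV
    have hsm : ∀ V : ↥Us, Cardinal.mk ↥((Option.some ⁻¹' (V : Set (Option X)))ᶜ) < κ := by
      intro V
      have h := ft_open_elim p V.1 (hopen V.1 V.2) (hnone V.1 V.2)
      rwa [hp] at h
    have hcover : (⋃ V : ↥Us, (Option.some ⁻¹' (V : Set (Option X)))ᶜ) = Set.univ := by
      ext x
      simp only [Set.mem_univ, iff_true, Set.mem_iUnion]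
      have hx : (Option.some x : Option X) ∉ ⋂₀ Us := by
        rw [hint]; simp
      rw [Set.mem_sInter] at hx
      push_neg at hx
      obtain ⟨V, hV, hxV⟩ := hx
      exact ⟨⟨V, hV⟩, hxV⟩
    refine ⟨?_, hsm⟩
    calc Cardinal.mk X = Cardinal.mk ↥(⋃ V : ↥Us, (Option.some ⁻¹' (V : Set (Option X)))ᶜ) := by
          rw [hcover, Cardinal.mk_univ]
      _ ≤ Cardinal.sum (fun V : ↥Us => Cardinal.mk ↥((Option.some ⁻¹' (V : Set (Option X)))ᶜ)) :=
          Cardinal.mk_iUnion_le_sum_mk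
      _ ≤ Cardinal.mk ↥Us * ⨆ V : ↥Us, Cardinal.mk ↥((Option.some ⁻¹' (V : Set (Option X)))ᶜ) :=
          Cardinal.sum_le_mk_mul_iSup _
  refine ⟨haNum, hfNorm, ?_, ?_⟩
  -- Part (ii)
  · intro hXκ
    obtain ⟨r, wo, hr⟩ := Cardinal.ord_eq X
    haveI := wo
    obtain ⟨S, hSu, hScard⟩ := Ordinal.cof_eq' r (by rw [← hr, hXκ]; exact Cardinal.isSuccLimit_ord hκ)
    set T : X → Set X := fun y => {x | r x y ∨ x = y} with hT
    have hTsmall : ∀ y, Cardinal.mk ↥(T y) < κ := by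
      intro y
      have h1 : Cardinal.mk {z // r z y} < κ := by
        have h := Cardinal.card_typein_lt (r := r) y hr
        rw [hXκ] at h
        rw [← Ordinal.card_typein]
        exact h
      have hTeq : T y = {x | r x y} ∪ {y} := by
        ext x; simp [hT, or_comm]
      have h2 : Cardinal.mk ↥(T y) ≤ Cardinal.mk ↥{x | r x y} + Cardinal.mk ↥({y} : Set X) := by
        rw [hTeq]; exact Cardinal.mk_union_le _ _
      rw [Cardinal.mk_singleton] at h2
      exact lt_of_le_of_lt h2
        (Cardinal.add_lt_of_lt hκ h1 (lt_of_lt_of_le Cardinal.one_lt_aleph0 hκ))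
    set V : X → Set (Option X) := fun y => insert none (Option.some '' (T y)ᶜ) with hV
    set Us : Set (Set (Option X)) := V '' S with hUs
    have hopen : ∀ W ∈ Us, (filterTop p).IsOpen W := by
      rintro W ⟨y, -, rfl⟩
      refine ft_open_intro p _ (fun _ => ?_)
      rw [hV]
      simp only
      rw [preim_insert, hp, compl_compl]
      exact hTsmall y
    have hint : ⋂₀ Us = {(none : Option X)} := by
      ext a
      constructor
      · intro ha
        cases a with
        | none => rfl
        | some x =>
          exfalso
          obtain ⟨y, hyS, hyr⟩ := hSu x
          have hx := ha (V y) (Set.mem_image_of_mem V hyS)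
          rcases Set.mem_insert_iff.1 hx with h1 | h2
          · exact nomatch h1
          · obtain ⟨z, hz, hzx⟩ := h2
            cases Option.some_injective X hzx
            rcases trichotomous_of r x y with h3 | h3 | h3
            · exact hz (Or.inl h3)
            · exact hz (Or.inr h3)
            · exact hz (Or.inl hyr)
      · intro ha
        rw [Set.mem_singleton_iff] at ha
        subst ha
        rintro W ⟨y, -, rfl⟩
        exact Set.mem_insert _ _
    have hub : psiNum (filterTop p) (none : Option X) ≤ κ.ord.cof := by
      have h1 : psiNum (filterTop p) (none : Option X) ≤ Cardinal.mk ↥Us := by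
        unfold psiNum
        exact csInf_le' ⟨Us, hopen, hint, rfl⟩
      have h2 : Cardinal.mk ↥Us ≤ Cardinal.mk ↥S := Cardinal.mk_image_le
      have h3 : Cardinal.mk ↥S = κ.ord.cof := by
        rw [hScard, ← hXκ, hr]
      exact h1.trans (h2.trans_eq h3)
    refine le_antisymm hub ?_
    unfold psiNum
    refine le_csInf ⟨Cardinal.mk ↥Us, Us, hopen, hint, rfl⟩ ?_
    rintro c ⟨Us', hop, hint', rfl⟩
    by_contra hcon
    push_neg at hcon
    obtain ⟨hle, hsm⟩ := hlow Us' hop hint'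
    have hsup := Cardinal.iSup_lt_of_lt_cof_ord hcon hsm
    have hUslt : Cardinal.mk ↥Us' < κ := lt_of_lt_of_le hcon (Ordinal.cof_ord_le κ)
    have := Cardinal.mul_lt_of_lt hκ hUslt hsup
    rw [hXκ] at hle
    exact absurd hle (not_le.2 this)
  -- Part (iii)
  · intro hκlt
    set V : X → Set (Option X) := fun x => insert none (Option.some '' ({x}ᶜ)) with hV
    set Us : Set (Set (Option X)) := Set.range V with hUs
    have hopen : ∀ W ∈ Us, (filterTop p).IsOpen W := by
      rintro W ⟨x, rfl⟩
      refine ft_open_intro p _ (fun _ => ?_)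
      rw [hV]
      simp only
      rw [preim_insert, hp, compl_compl, Cardinal.mk_singleton]
      exact lt_of_lt_of_le Cardinal.one_lt_aleph0 hκ
    have hint : ⋂₀ Us = {(none : Option X)} := by
      ext a
      constructor
      · intro ha
        cases a with
        | none => rfl
        | some x =>
          exfalso
          have hx := ha (V x) ⟨x, rfl⟩
          rcases Set.mem_insert_iff.1 hx with h1 | h2
          · exact nomatch h1
          · obtain ⟨z, hz, hzx⟩ := h2
            cases Option.some_injective X hzx
            exact hz rfl
      · intro ha
        rw [Set.mem_singleton_iff] at ha
        subst ha
        rintro W ⟨x, rfl⟩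
        exact Set.mem_insert _ _
    have hub : psiNum (filterTop p) (none : Option X) ≤ Cardinal.mk X := by
      have h1 : psiNum (filterTop p) (none : Option X) ≤ Cardinal.mk ↥Us := by
        unfold psiNum
        exact csInf_le' ⟨Us, hopen, hint, rfl⟩
      exact h1.trans Cardinal.mk_range_le
    refine le_antisymm hub ?_
    unfold psiNum
    refine le_csInf ⟨Cardinal.mk ↥Us, Us, hopen, hint, rfl⟩ ?_
    rintro c ⟨Us', hop, hint', rfl⟩
    by_contra hcon
    push_neg at hcon
    obtain ⟨hle, hsm⟩ := hlow Us' hop hint'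
    have hsup : (⨆ W : ↥Us', Cardinal.mk ↥((Option.some ⁻¹' (W : Set (Option X)))ᶜ)) ≤ κ :=
      ciSup_le' (fun W => (hsm W).le)
    have hmul : Cardinal.mk ↥Us' *
        (⨆ W : ↥Us', Cardinal.mk ↥((Option.some ⁻¹' (W : Set (Option X)))ᶜ)) < Cardinal.mk X :=
      lt_of_le_of_lt (mul_le_mul_right hsup _) (Cardinal.mul_lt_of_lt hX0 hcon hκlt)
    exact absurd hle (not_le.2 hmul)
end

section
/- Let X be a set and κ an infinite cardinal with κ ≤ |X|, and let p^κ = {A ⊆ X : |X \ A| < κ}. Then the following are equivalent: (a) the filter space X_{p^κ} is weakly p^κ-orderable; (b) X_{p^κ} admits a separately continuous selection relation; (c) |X| = κ. -/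
open Set

universe u v w y

section AuxStmt7

open Cardinal Ordinal

lemma tournament_card_le {X : Type u} {κ : Cardinal.{u}} (hκ : Cardinal.aleph0 ≤ κ)
    (A : Set X) (D : X → Set X)
    (hsmall : ∀ a ∈ A, Cardinal.mk (D a) < κ)
    (htot : ∀ a ∈ A, ∀ b ∈ A, a ∈ D b ∨ b ∈ D a) :
    Cardinal.mk A ≤ κ := by
  by_contra hlt
  push_neg at hlt
  have hsucc : Order.succ κ ≤ Cardinal.mk A := Order.succ_le_of_lt hlt
  set o : Ordinal.{u} := (Order.succ κ).ord with ho
  haveI hwo : IsWellOrder o.ToType ((· < ·) : o.ToType → o.ToType → Prop) := isWellOrder_lt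
  have hmkT : #o.ToType = Order.succ κ := by
    rw [Cardinal.mk_toType, ho, Cardinal.card_ord]
  obtain ⟨j⟩ : Nonempty (o.ToType ↪ ↥A) := by
    rw [← Cardinal.le_def, hmkT]; exact hsucc
  let D' : o.ToType → Set o.ToType := fun t => {s : o.ToType | (↑(j s) : X) ∈ D ↑(j t)}
  have hsmall' : ∀ t : o.ToType, #(D' t) < κ := by
    intro t
    have : #(D' t) ≤ #(D ↑(j t)) := by
      refine Cardinal.mk_le_of_injective (f := fun s => ⟨↑(j s.1), s.2⟩) ?_
      intro a b hab
      simp only [Subtype.mk_eq_mk] at hab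
      exact Subtype.ext (j.injective (Subtype.ext hab))
    exact this.trans_lt (hsmall _ (j t).2)
  have htot' : ∀ s t : o.ToType, s ∈ D' t ∨ t ∈ D' s := fun s t =>
    htot _ (j s).2 _ (j t).2
  have htype : type ((· < ·) : o.ToType → o.ToType → Prop) = o := type_toType o
  have hcof : Ordinal.cof o = Order.succ κ := (Cardinal.isRegular_succ hκ).cof_eq
  have hbound : ∀ s : Set o.ToType, #s ≤ κ → ∃ b : o.ToType, ∀ x ∈ s, x < b := by
    intro s hs
    have : #s < Ordinal.cof (type ((· < ·) : o.ToType → o.ToType → Prop)) := by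
      rw [htype, hcof]; exact hs.trans_lt (Order.lt_succ κ)
    rw [Ordinal.cof_type] at this
    exact not_isCofinal_iff.1 (fun hc => absurd (Order.cof_le hc) (not_le.2 this))
  have hIio : ∀ t : o.ToType, #(Iio t) ≤ κ := by
    intro t
    have h1 : #(Iio t) = (typein ((· < ·) : o.ToType → o.ToType → Prop) t).card := rfl
    have h2 := typein_lt_type ((· < ·) : o.ToType → o.ToType → Prop) t
    rw [htype] at h2
    rw [h1]
    exact Order.lt_succ_iff.1 (Cardinal.lt_ord.1 h2)
  have hIic : ∀ t : o.ToType, #(Iic t) ≤ κ := by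
    intro t
    have : (Iic t : Set o.ToType) = insert t (Iio t) := by
      ext x; simp [le_iff_lt_or_eq, or_comm]
    rw [this]
    calc #(insert t (Iio t) : Set o.ToType) ≤ #(Iio t) + 1 := Cardinal.mk_insert_le
      _ ≤ κ + 1 := by gcongr; exact hIio t
      _ = κ := Cardinal.add_one_eq hκ
  -- the step set
  have hstep : ∀ u : o.ToType,
      ∃ b : o.ToType, ∀ x ∈ insert u (⋃ v ∈ Iic u, D' v), x < b := by
    intro u
    apply hbound
    calc #(insert u (⋃ v ∈ Iic u, D' v) : Set o.ToType)
        ≤ #(⋃ v ∈ Iic u, D' v) + 1 := Cardinal.mk_insert_le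
      _ ≤ κ + 1 := by
          gcongr
          calc #(⋃ v ∈ Iic u, D' v) ≤ #(Iic u) * ⨆ v : Iic u, #(D' v) :=
                Cardinal.mk_biUnion_le _ _
            _ ≤ κ * κ := by
                haveI : Nonempty (Iic u) := ⟨⟨u, Set.mem_Iic.2 le_rfl⟩⟩
                exact mul_le_mul' (hIic u) (ciSup_le' fun v => (hsmall' v).le)
            _ = κ := Cardinal.mul_eq_self hκ
      _ = κ := Cardinal.add_one_eq hκ
  let F : o.ToType → o.ToType := fun u => (hstep u).choose
  have hF : ∀ u, ∀ x ∈ insert u (⋃ v ∈ Iic u, D' v), x < F u := fun u => (hstep u).choose_spec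
  -- starting point
  have hκo : κ.ord < type ((· < ·) : o.ToType → o.ToType → Prop) := by
    rw [htype, ho]
    exact Cardinal.ord_lt_ord.2 (Order.lt_succ κ)
  let t0 : o.ToType := enum ((· < ·) : o.ToType → o.ToType → Prop) ⟨κ.ord, hκo⟩
  have ht0 : #(Iio t0) = κ := by
    have h1 : #(Iio t0) = (typein ((· < ·) : o.ToType → o.ToType → Prop) t0).card := rfl
    rw [h1, typein_enum, Cardinal.card_ord]
  -- the sequence
  let t : ℕ → o.ToType := fun n => F^[n] t0
  have htsucc : ∀ n, t n < t (n + 1) := by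
    intro n
    have : t (n + 1) = F (t n) := Function.iterate_succ_apply' F n t0
    rw [this]
    exact hF (t n) _ (mem_insert _ _)
  have htmono : StrictMono t := strictMono_nat_of_lt_succ htsucc
  -- least strict upper bound
  obtain ⟨b, hb⟩ : ∃ b : o.ToType, ∀ x ∈ range t, x < b := by
    apply hbound
    haveI := (Set.countable_range t).to_subtype
    exact Cardinal.mk_le_aleph0.trans hκ
  have hSUBne : {x : o.ToType | ∀ n, t n < x}.Nonempty := ⟨b, fun n => hb _ (mem_range_self n)⟩
  have wf : WellFounded ((· < ·) : o.ToType → o.ToType → Prop) := hwo.wf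
  set ts : o.ToType := wf.min _ hSUBne with hts_def
  have hts : ∀ n, t n < ts := wf.min_mem _ hSUBne
  have hleast : ∀ s, s < ts → ∃ n, s ≤ t n := by
    intro s hs
    by_contra h
    push_neg at h
    exact wf.not_lt_min {x : o.ToType | ∀ n, t n < x} (x := s) (fun n => h n) hs
  have hsub : Iio ts ⊆ D' ts := by
    intro s hs
    obtain ⟨n, hn⟩ := hleast s hs
    have hDs : ∀ x ∈ D' s, x < t (n + 1) := by
      intro x hx
      have : t (n + 1) = F (t n) := Function.iterate_succ_apply' F n t0
      rw [this]
      exact hF (t n) x (mem_insert_of_mem _ (mem_biUnion (mem_Iic.2 hn) hx))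
    have htsn : ts ∉ D' s := fun hmem => absurd (hts (n + 1)) (asymm (hDs ts hmem))
    rcases htot' s ts with h | h
    · exact h
    · exact absurd h htsn
  have hcontra : κ ≤ #(D' ts) := by
    have hsub0 : (Iio t0 : Set o.ToType) ⊆ Iio ts := fun x hx => lt_trans hx (hts 0)
    calc κ = #(Iio t0) := ht0.symm
      _ ≤ #(Iio ts) := Cardinal.mk_le_mk_of_subset hsub0
      _ ≤ #(D' ts) := Cardinal.mk_le_mk_of_subset hsub
  exact absurd hcontra (not_le.2 (hsmall' ts))

lemma filterTop_isOpen_iff {X : Type u} (p : Filter X) (U : Set (Option X)) :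
    (filterTop p).IsOpen U ↔ (none ∈ U → (Option.some ⁻¹' U) ∈ p) := Iff.rfl

end AuxStmt7

/-- For an infinite cardinal `κ ≤ |X|` and the filter
`p^κ = {A ⊆ X : |X \ A| < κ}`, the following are equivalent:
(a) `X_{p^κ}` is weakly `p^κ`-orderable; (b) `X_{p^κ}` admits a separately continuous
selection relation; (c) `|X| = κ`. -/
theorem stmt7 {X : Type u} (κ : Cardinal.{u}) (hκ : Cardinal.aleph0 ≤ κ)
    (hκX : κ ≤ Cardinal.mk X)
    (p : Filter X) (hp : ∀ A : Set X, A ∈ p ↔ Cardinal.mk ↥(Aᶜ) < κ) :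
    (WeaklyPOrderable (filterTop p) (none : Option X) ↔ Cardinal.mk X = κ) ∧
    ((∃ R : Option X → Option X → Prop, SelRel R ∧ SepCont (filterTop p) R) ↔
      Cardinal.mk X = κ) := by
  classical
  -- (c) → (a)
  have h1 : Cardinal.mk X = κ → WeaklyPOrderable (filterTop p) (none : Option X) := by
    intro hX
    haveI hwo : IsWellOrder κ.ord.ToType ((· < ·) : κ.ord.ToType → κ.ord.ToType → Prop) :=
      isWellOrder_lt
    have hmk : Cardinal.mk X = Cardinal.mk κ.ord.ToType := by
      rw [hX, Cardinal.mk_toType, Cardinal.card_ord]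
    obtain ⟨e⟩ := Cardinal.eq.1 hmk
    letI rX : LinearOrder X := LinearOrder.lift' e e.injective
    have hIio : ∀ x : X, Cardinal.mk {y : X | y < x} < κ := by
      intro x
      have hle : Cardinal.mk {y : X | y < x} ≤ Cardinal.mk (Set.Iio (e x)) := by
        refine Cardinal.mk_le_of_injective (f := fun y => ⟨e y.1, y.2⟩) ?_
        intro a b hab
        simp only [Subtype.mk_eq_mk] at hab
        exact Subtype.ext (e.injective (congrArg Subtype.val hab))
      refine hle.trans_lt ?_
      have h1 : Cardinal.mk (Set.Iio (e x)) =
          (Ordinal.typein ((· < ·) : κ.ord.ToType → κ.ord.ToType → Prop) (e x)).card := rfl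
      have h2 := Ordinal.typein_lt_type ((· < ·) : κ.ord.ToType → κ.ord.ToType → Prop) (e x)
      rw [Ordinal.type_toType] at h2
      rw [h1]
      exact Cardinal.lt_ord.1 h2
    letI rO : LinearOrder (Option X) := (inferInstance : LinearOrder (WithTop X))
    have hIic : ∀ x : X, Cardinal.mk (Set.Iic x) < κ := by
      intro x
      have : (Set.Iic x : Set X) = insert x {y : X | y < x} := by
        ext z; simp [le_iff_lt_or_eq, or_comm]
      rw [this]
      calc Cardinal.mk (insert x {y : X | y < x} : Set X)
          ≤ Cardinal.mk {y : X | y < x} + 1 := Cardinal.mk_insert_le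
        _ < κ := Cardinal.add_lt_of_lt hκ (hIio x) (lt_of_lt_of_le Cardinal.one_lt_aleph0 hκ)
    refine ⟨rO, ?_, ?_⟩
    · -- weak orderability
      have hgen : ∀ s ∈ {S : Set (Option X) | ∃ a : Option X,
          S = {z | rO.lt z a} ∨ S = {z | rO.lt a z}}, (filterTop p).IsOpen s := by
        rintro s ⟨a, (rfl | rfl)⟩
        · refine (filterTop_isOpen_iff p _).2 ?_
          intro hnone
          exact absurd hnone (not_top_lt (α := WithTop X))
        · refine (filterTop_isOpen_iff p _).2 ?_
          intro hnone
          rcases a with _ | x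
          · simp only [Set.mem_setOf_eq] at hnone
            exact absurd hnone (lt_irrefl _)
          · rw [hp]
            have hpre : Option.some ⁻¹' {z : Option X | rO.lt (some x) z} = {y : X | x < y} := by
              ext y
              exact WithTop.coe_lt_coe
            rw [hpre]
            have hcompl : ({y : X | x < y})ᶜ = Set.Iic x := by
              ext y; simp [Set.mem_Iic, not_lt]
            rw [hcompl]
            exact hIic x
      have hle : filterTop p ≤ ordTop rO := le_generateFrom hgen
      intro S hS
      exact (TopologicalSpace.le_def.1 hle) S hS
    · intro z
      exact @le_top (WithTop X) _ _ z
  -- (a) → (b)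
  have h2 : WeaklyPOrderable (filterTop p) (none : Option X) →
      ∃ R : Option X → Option X → Prop, SelRel R ∧ SepCont (filterTop p) R := by
    rintro ⟨r, hWO, _⟩
    letI := r
    refine ⟨r.le, ⟨r.le_total, fun x y => r.le_antisymm x y⟩, ?_⟩
    intro x
    constructor
    · have hset : {z : Option X | r.le z x ∧ z ≠ x} = {z : Option X | r.lt z x} := by
        ext z
        simp only [Set.mem_setOf_eq]
        exact (lt_iff_le_and_ne).symm
      rw [hset]
      exact hWO _ (TopologicalSpace.GenerateOpen.basic _ ⟨x, Or.inl rfl⟩)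
    · have hset : {z : Option X | r.le x z ∧ x ≠ z} = {z : Option X | r.lt x z} := by
        ext z
        simp only [Set.mem_setOf_eq]
        exact (lt_iff_le_and_ne).symm
      rw [hset]
      exact hWO _ (TopologicalSpace.GenerateOpen.basic _ ⟨x, Or.inr rfl⟩)
  -- (b) → (c)
  have h3 : (∃ R : Option X → Option X → Prop, SelRel R ∧ SepCont (filterTop p) R) →
      Cardinal.mk X = κ := by
    rintro ⟨R, ⟨htotR, hanti⟩, hsep⟩
    have hA : Cardinal.mk {x : X | R (some x) none} ≤ κ := by
      apply tournament_card_le hκ _ (fun a => {y : X | R (some y) (some a)})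
      · intro a ha
        have hopen := (hsep (some a)).2
        rw [filterTop_isOpen_iff] at hopen
        have hmem : (none : Option X) ∈ {z : Option X | R (some a) z ∧ (some a : Option X) ≠ z} :=
          ⟨ha, fun h => Option.some_ne_none _ h⟩
        have hP := hopen hmem
        rw [hp] at hP
        refine lt_of_le_of_lt (Cardinal.mk_le_mk_of_subset ?_) hP
        intro y hy hy'
        exact hy'.2 (hanti _ _ hy'.1 hy)
      · intro a _ b _
        exact htotR (some a) (some b)
    have hB : Cardinal.mk {x : X | R none (some x)} ≤ κ := by
      apply tournament_card_le hκ _ (fun b => {y : X | R (some b) (some y)})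
      · intro b hb
        have hopen := (hsep (some b)).1
        rw [filterTop_isOpen_iff] at hopen
        have hmem : (none : Option X) ∈ {z : Option X | R z (some b) ∧ z ≠ (some b : Option X)} :=
          ⟨hb, fun h => Option.some_ne_none _ h.symm⟩
        have hP := hopen hmem
        rw [hp] at hP
        refine lt_of_le_of_lt (Cardinal.mk_le_mk_of_subset ?_) hP
        intro y hy hy'
        exact hy'.2 (hanti _ _ hy'.1 hy)
      · intro a _ b _
        exact htotR (some b) (some a)
    have hcover : (Set.univ : Set X) ⊆ {x : X | R (some x) none} ∪ {x : X | R none (some x)} :=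
      fun x _ => htotR (some x) none
    have hXle : Cardinal.mk X ≤ κ := by
      calc Cardinal.mk X = Cardinal.mk (Set.univ : Set X) := Cardinal.mk_univ.symm
        _ ≤ Cardinal.mk ({x : X | R (some x) none} ∪ {x : X | R none (some x)} : Set X) :=
            Cardinal.mk_le_mk_of_subset hcover
        _ ≤ Cardinal.mk {x : X | R (some x) none} + Cardinal.mk {x : X | R none (some x)} :=
            Cardinal.mk_union_le _ _
        _ ≤ κ + κ := add_le_add hA hB
        _ = κ := Cardinal.add_eq_self hκ
    exact le_antisymm hXle hκX
  exact ⟨⟨fun ha => h3 (h2 ha), h1⟩, ⟨h3, fun hc => h2 (h1 hc)⟩⟩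
end

section
/- Let X be a set and κ an infinite cardinal with κ ≤ |X|, and let p^κ = {A ⊆ X : |X \ A| < κ}. Then the following are equivalent: (a) the filter space X_{p^κ} is p^κ-orderable; (b) X_{p^κ} is orderable; (c) |X| = κ and κ is a regular cardinal. -/
open Set

universe u v w y

section Stmt8Aux

open Cardinal

private lemma stmt8_isWellOrder_toType (o : Ordinal.{u}) : IsWellOrder o.ToType (· < ·) :=
  inferInstance

private lemma stmt8_mk_Iio_toType_lt (κ : Cardinal.{u}) (a : κ.ord.ToType) :
    #(Set.Iio a) < κ := by
  have h := Ordinal.typein_lt_self a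
  have h2 := Cardinal.lt_ord.mp h
  haveI := stmt8_isWellOrder_toType κ.ord
  exact h2

private lemma stmt8_mk_Iic_toType_lt {κ : Cardinal.{u}} (hκ : Cardinal.aleph0 ≤ κ)
    (a : κ.ord.ToType) : #(Set.Iic a) < κ := by
  have hsub : Set.Iic a ⊆ insert a (Set.Iio a) := by
    intro x hx
    rcases eq_or_lt_of_le (Set.mem_Iic.mp hx) with h | h
    · exact Set.mem_insert_iff.mpr (Or.inl h)
    · exact Set.mem_insert_iff.mpr (Or.inr h)
  refine lt_of_le_of_lt (Cardinal.mk_le_mk_of_subset hsub) ?_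
  refine lt_of_le_of_lt Cardinal.mk_insert_le ?_
  exact Cardinal.add_lt_of_lt hκ (stmt8_mk_Iio_toType_lt κ a) (one_lt_aleph0.trans_le hκ)

private lemma stmt8_mk_some_preimage {X : Type u} {W : Set (Option X)} (hW : none ∉ W) :
    #(Option.some ⁻¹' W) = #W := by
  apply Cardinal.mk_congr
  refine Equiv.ofBijective (fun x => (⟨some x.1, x.2⟩ : W)) ⟨?_, ?_⟩
  · intro a b hab
    apply Subtype.ext
    have := congrArg Subtype.val hab
    exact Option.some_injective _ this
  · rintro ⟨z, hz⟩
    match z with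
    | none => exact absurd hz hW
    | some x => exact ⟨⟨x, hz⟩, rfl⟩

end Stmt8Aux
section Stmt8Interval

open Cardinal

variable {Z : Type u} [r : LinearOrder Z]

private def Stmt8LForm (L : Set Z) : Prop := L = Set.univ ∨ ∃ a : Z, L = {z | a < z}
private def Stmt8RForm (R : Set Z) : Prop := R = Set.univ ∨ ∃ b : Z, R = {z | z < b}

private lemma stmt8_lform_chain {L1 L2 : Set Z} (h1 : Stmt8LForm L1) (h2 : Stmt8LForm L2) :
    L1 ⊆ L2 ∨ L2 ⊆ L1 := by
  rcases h1 with rfl | ⟨a1, rfl⟩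
  · exact Or.inr (Set.subset_univ _)
  · rcases h2 with rfl | ⟨a2, rfl⟩
    · exact Or.inl (Set.subset_univ _)
    · rcases le_total a1 a2 with h | h
      · exact Or.inr (fun z hz => lt_of_le_of_lt h hz)
      · exact Or.inl (fun z hz => lt_of_le_of_lt h hz)

private lemma stmt8_rform_chain {R1 R2 : Set Z} (h1 : Stmt8RForm R1) (h2 : Stmt8RForm R2) :
    R1 ⊆ R2 ∨ R2 ⊆ R1 := by
  rcases h1 with rfl | ⟨b1, rfl⟩
  · exact Or.inr (Set.subset_univ _)
  · rcases h2 with rfl | ⟨b2, rfl⟩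
    · exact Or.inl (Set.subset_univ _)
    · rcases le_total b1 b2 with h | h
      · exact Or.inl (fun z hz => lt_of_lt_of_le hz h)
      · exact Or.inr (fun z hz => lt_of_lt_of_le hz h)

private lemma stmt8_exists_interval {U : Set Z}
    (hU : TopologicalSpace.GenerateOpen
      {S : Set Z | ∃ a : Z, S = {z | r.lt z a} ∨ S = {z | r.lt a z}} U) :
    ∀ z0 ∈ U, ∃ L R : Set Z, Stmt8LForm L ∧ Stmt8RForm R ∧ z0 ∈ L ∩ R ∧ L ∩ R ⊆ U := by
  induction hU with
  | basic s hs =>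
    intro z0 hz
    obtain ⟨a, rfl | rfl⟩ := hs
    · exact ⟨Set.univ, {z | z < a}, Or.inl rfl, Or.inr ⟨a, rfl⟩, ⟨trivial, hz⟩,
        Set.inter_subset_right⟩
    · exact ⟨{z | a < z}, Set.univ, Or.inr ⟨a, rfl⟩, Or.inl rfl, ⟨hz, trivial⟩,
        Set.inter_subset_left⟩
  | univ =>
    intro z0 _
    exact ⟨Set.univ, Set.univ, Or.inl rfl, Or.inl rfl, ⟨trivial, trivial⟩, fun _ _ => trivial⟩
  | inter U V _ _ ihU ihV =>
    intro z0 hz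
    obtain ⟨L1, R1, hL1, hR1, hz1, hs1⟩ := ihU z0 hz.1
    obtain ⟨L2, R2, hL2, hR2, hz2, hs2⟩ := ihV z0 hz.2
    obtain ⟨L, hL, hLs1, hLs2, hzL⟩ :
        ∃ L, Stmt8LForm L ∧ L ⊆ L1 ∧ L ⊆ L2 ∧ z0 ∈ L := by
      rcases stmt8_lform_chain hL1 hL2 with h | h
      · exact ⟨L1, hL1, le_refl _, h, hz1.1⟩
      · exact ⟨L2, hL2, h, le_refl _, hz2.1⟩
    obtain ⟨R, hR, hRs1, hRs2, hzR⟩ :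
        ∃ R, Stmt8RForm R ∧ R ⊆ R1 ∧ R ⊆ R2 ∧ z0 ∈ R := by
      rcases stmt8_rform_chain hR1 hR2 with h | h
      · exact ⟨R1, hR1, le_refl _, h, hz1.2⟩
      · exact ⟨R2, hR2, h, le_refl _, hz2.2⟩
    refine ⟨L, R, hL, hR, ⟨hzL, hzR⟩, ?_⟩
    intro w hw
    exact ⟨hs1 ⟨hLs1 hw.1, hRs1 hw.2⟩, hs2 ⟨hLs2 hw.1, hRs2 hw.2⟩⟩
  | sUnion S _ ih =>
    intro z0 hz
    obtain ⟨s, hsS, hzs⟩ := hz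
    obtain ⟨L, R, hL, hR, hzLR, hsub⟩ := ih s hsS z0 hzs
    exact ⟨L, R, hL, hR, hzLR, hsub.trans (Set.subset_sUnion_of_mem hsS)⟩

end Stmt8Interval
section Stmt8Combin

open Cardinal

private lemma stmt8_nonempty_of_le {A : Type u} {κ : Cardinal.{u}}
    (hκ : Cardinal.aleph0 ≤ κ) (hA : κ ≤ #A) : Nonempty A := by
  rw [← Cardinal.mk_ne_zero_iff]
  intro h0
  rw [h0] at hA
  exact absurd (hκ.trans hA) (by simpa using Cardinal.aleph0_pos.ne')

private lemma stmt8_key_singular {A : Type u} [LinearOrder A] {κ : Cardinal.{u}}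
    (hκ : Cardinal.aleph0 ≤ κ)
    (hIic : ∀ a : A, #(Set.Iic a) < κ)
    (hbdd : ∀ S : Set A, S.Nonempty → #S < κ → BddAbove S)
    (hA : κ ≤ #A) (hcof : κ.ord.cof < κ) : False := by
  obtain ⟨a₀⟩ := stmt8_nonempty_of_le hκ hA
  obtain ⟨ι, f, hlsub, hmkι⟩ := Ordinal.exists_lsub_cof κ.ord
  have hfi : ∀ i, (f i).card < κ := fun i =>
    Cardinal.lt_ord.mp (hlsub ▸ Ordinal.lt_lsub f i)
  have hT : ∀ i, ∃ T : Set A, #T = (f i).card := fun i =>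
    Cardinal.le_mk_iff_exists_set.mp ((hfi i).le.trans hA)
  choose T hTcard using hT
  have h1κ : (1 : Cardinal) < κ := one_lt_aleph0.trans_le hκ
  have hb : ∀ i, ∃ b, b ∈ upperBounds (insert a₀ (T i)) := fun i =>
    hbdd _ ⟨a₀, Set.mem_insert _ _⟩
      (lt_of_le_of_lt Cardinal.mk_insert_le
        (Cardinal.add_lt_of_lt hκ (hTcard i ▸ hfi i) h1κ))
  choose b hbspec using hb
  obtain ⟨c, hc⟩ := hbdd (insert a₀ (Set.range b)) ⟨a₀, Set.mem_insert _ _⟩ (by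
    refine lt_of_le_of_lt Cardinal.mk_insert_le ?_
    refine Cardinal.add_lt_of_lt hκ (lt_of_le_of_lt Cardinal.mk_range_le ?_) h1κ
    rw [hmkι]; exact hcof)
  set m := #(Set.Iic c) with hmdef
  have hm : m < κ := hIic c
  have hci : ∀ i, (f i).card ≤ m := by
    intro i
    rw [← hTcard i]
    refine Cardinal.mk_le_mk_of_subset ?_
    intro t ht
    have h1 : t ≤ b i := hbspec i (Set.mem_insert_of_mem _ ht)
    have h2 : b i ≤ c := hc (Set.mem_insert_of_mem _ ⟨i, rfl⟩)
    exact Set.mem_Iic.mpr (h1.trans h2)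
  have hsm : Order.succ m ≤ κ := Order.succ_le_of_lt hm
  rcases lt_or_eq_of_le hsm with h | h
  · have hlt : (Order.succ m).ord < κ.ord := Cardinal.ord_lt_ord.mpr h
    rw [← hlsub] at hlt
    obtain ⟨i, hi⟩ := Ordinal.lt_lsub_iff.mp hlt
    have h2 : Order.succ m ≤ (f i).card := by
      have h3 := Ordinal.card_le_card hi
      rwa [Cardinal.card_ord] at h3
    exact absurd (h2.trans (hci i)) (not_le.mpr (Order.lt_succ m))
  · have hm0 : Cardinal.aleph0 ≤ m := by
      by_contra hmfin
      push_neg at hmfin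
      have h2 : Order.succ m ≤ Cardinal.aleph0 := Order.succ_le_of_lt hmfin
      rw [h] at h2
      have hκℵ : κ = Cardinal.aleph0 := le_antisymm h2 hκ
      rw [hκℵ] at hcof
      exact absurd Cardinal.isRegular_aleph0.2 (not_le.mpr hcof)
    have h2 := (Cardinal.isRegular_succ hm0).2
    rw [h] at h2
    exact absurd h2 (not_le.mpr hcof)

private lemma stmt8_mk_le {A : Type u} [LinearOrder A] {κ : Cardinal.{u}}
    (hκ : Cardinal.aleph0 ≤ κ)
    (hIic : ∀ a : A, #(Set.Iic a) < κ)
    (hbdd : ∀ S : Set A, S.Nonempty → #S < κ → BddAbove S) :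
    Cardinal.mk A ≤ κ := by
  by_contra hlt'
  push_neg at hlt'
  obtain ⟨a₀⟩ := stmt8_nonempty_of_le hκ hlt'.le
  have hstep : ∀ (i : κ.ord.ToType) (g : ∀ j, j < i → A),
      ∃ z : A, ∀ j (h : j < i), g j h < z := by
    intro i g
    obtain ⟨bnd, hbnd⟩ := hbdd (insert a₀ (Set.range (fun j : Set.Iio i => g j.1 j.2)))
      ⟨a₀, Set.mem_insert _ _⟩ (by
        refine lt_of_le_of_lt Cardinal.mk_insert_le ?_
        exact Cardinal.add_lt_of_lt hκ (lt_of_le_of_lt Cardinal.mk_range_le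
          (stmt8_mk_Iio_toType_lt κ i)) (one_lt_aleph0.trans_le hκ))
    have hex : ¬ (∀ z : A, z ≤ bnd) := by
      intro hall
      have hsub : (Set.univ : Set A) ⊆ Set.Iic bnd := fun z _ => hall z
      have h2 := Cardinal.mk_le_mk_of_subset hsub
      rw [Cardinal.mk_univ] at h2
      exact absurd (h2.trans (hIic bnd).le) (not_le.mpr hlt')
    push_neg at hex
    obtain ⟨z, hz⟩ := hex
    exact ⟨z, fun j h =>
      lt_of_le_of_lt (hbnd (Set.mem_insert_of_mem _ ⟨⟨j, h⟩, rfl⟩)) hz⟩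
  let wf := (inferInstance : WellFoundedLT κ.ord.ToType).wf
  let F : κ.ord.ToType → A := wf.fix (fun i rec => Classical.choose (hstep i rec))
  have hFeq : ∀ i, F i = Classical.choose (hstep i (fun j _ => F j)) := fun i =>
    wf.fix_eq _ i
  have hFmono : ∀ j i, j < i → F j < F i := by
    intro j i h
    have h2 := Classical.choose_spec (hstep i (fun j _ => F j)) j h
    rw [hFeq i]
    exact h2
  have hFinj : Function.Injective F := by
    intro a b hab
    rcases lt_trichotomy a b with h | h | h
    · exact absurd hab (ne_of_lt (hFmono a b h))
    · exact h
    · exact absurd hab.symm (ne_of_lt (hFmono b a h))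
  have hrange : #(Set.range F) = κ := by
    rw [Cardinal.mk_range_eq F hFinj, Cardinal.mk_toType, Cardinal.card_ord]
  by_cases hbb : BddAbove (Set.range F)
  · obtain ⟨bnd, hbnd⟩ := hbb
    have hsub : Set.range F ⊆ Set.Iic bnd := fun z hz => hbnd hz
    have h2 := Cardinal.mk_le_mk_of_subset hsub
    rw [hrange] at h2
    exact absurd (h2.trans_lt (hIic bnd)) (lt_irrefl κ)
  · haveI : Nonempty κ.ord.ToType := by
      rw [Ordinal.toType_nonempty_iff_ne_zero]
      intro h0
      have : κ.ord.card = 0 := by rw [h0]; simp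
      rw [Cardinal.card_ord] at this
      rw [this] at hκ
      exact absurd hκ (by simpa using Cardinal.aleph0_pos.ne')
    have hcover : (Set.univ : Set A) ⊆ ⋃ i, Set.Iic (F i) := by
      intro z _
      rw [bddAbove_def] at hbb
      push_neg at hbb
      obtain ⟨y, hy, hyz⟩ := hbb z
      obtain ⟨i, rfl⟩ := hy
      exact Set.mem_iUnion.mpr ⟨i, Set.mem_Iic.mpr (le_of_lt hyz)⟩
    have h1 : #A ≤ #(⋃ i, Set.Iic (F i)) := by
      rw [← Cardinal.mk_univ]
      exact Cardinal.mk_le_mk_of_subset hcover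
    have h2 := Cardinal.mk_iUnion_le (fun i : κ.ord.ToType => Set.Iic (F i))
    have h3 : ⨆ i, #(Set.Iic (F i)) ≤ κ := ciSup_le' (fun i => (hIic (F i)).le)
    have h4 : #(κ.ord.ToType) * ⨆ i, #(Set.Iic (F i)) ≤ κ * κ := by
      refine mul_le_mul' ?_ h3
      rw [Cardinal.mk_toType, Cardinal.card_ord]
    rw [Cardinal.mul_eq_self hκ] at h4
    exact absurd ((h1.trans h2).trans h4) (not_le.mpr hlt')

private lemma stmt8_combinC {A : Type u} [LinearOrder A] {κ : Cardinal.{u}}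
    (hκ : Cardinal.aleph0 ≤ κ)
    (hIic : ∀ a : A, #(Set.Iic a) < κ)
    (hbdd : ∀ S : Set A, S.Nonempty → #S < κ → BddAbove S) :
    Cardinal.mk A ≤ κ ∧ (κ ≤ #A → κ.ord.cof = κ) :=
  ⟨stmt8_mk_le hκ hIic hbdd, fun hA =>
    le_antisymm (le_of_le_of_eq (Ordinal.cof_le_card _) (Cardinal.card_ord κ))
      (not_lt.mp (fun h => stmt8_key_singular hκ hIic hbdd hA h))⟩

private lemma stmt8_combinC_dual {A : Type u} [LinearOrder A] {κ : Cardinal.{u}}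
    (hκ : Cardinal.aleph0 ≤ κ)
    (hIci : ∀ a : A, #(Set.Ici a) < κ)
    (hbdd : ∀ S : Set A, S.Nonempty → #S < κ → BddBelow S) :
    Cardinal.mk A ≤ κ ∧ (κ ≤ #A → κ.ord.cof = κ) := by
  have h := stmt8_combinC (A := Aᵒᵈ) hκ (fun a => hIci (OrderDual.ofDual a))
    (fun S hne hcard => hbdd S hne hcard)
  exact h

end Stmt8Combin
section Stmt8Construct

open Cardinal

private lemma stmt8_constructA {X Y : Type u} [LinearOrder Y] {κ : Cardinal.{u}}
    (hκ : Cardinal.aleph0 ≤ κ)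
    (p : Filter X) (hp : ∀ A : Set X, A ∈ p ↔ #(↥(Aᶜ)) < κ)
    (e : X ≃ Y)
    (hsucc : ∀ y : Y, ∃ z, y ⋖ z)
    (hpred : ∀ y : Y, (∀ w : Y, ¬ w < y) ∨ ∃ w, w ⋖ y)
    (hIic : ∀ y : Y, #(Set.Iic y) < κ)
    (hbdd : ∀ S : Set Y, #S < κ → BddAbove S) :
    POrderable (filterTop p) (none : Option X) := by
  classical
  let φ : Option X → WithTop Y := fun o => match o with
    | none => ⊤
    | some x => (e x : WithTop Y)
  have hφinj : Function.Injective φ := by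
    intro a b hab
    match a, b with
    | none, none => rfl
    | none, some x => exact absurd hab.symm (WithTop.coe_ne_top)
    | some x, none => exact absurd hab (WithTop.coe_ne_top)
    | some x, some y =>
      have : e x = e y := WithTop.coe_injective hab
      rw [e.injective this]
  let r : LinearOrder (Option X) := LinearOrder.lift' φ hφinj
  have hlt : ∀ a b : Option X, r.lt a b ↔ φ a < φ b := fun a b => Iff.rfl
  have hle : ∀ a b : Option X, r.le a b ↔ φ a ≤ φ b := fun a b => Iff.rfl
  have hlt_some : ∀ x y : X, r.lt (some x) (some y) ↔ e x < e y := by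
    intro x y
    rw [hlt]
    exact WithTop.coe_lt_coe
  have hlt_top : ∀ x : X, r.lt (some x) none := fun x =>
    (hlt _ _).mpr (WithTop.coe_lt_top (e x))
  have hnlt : ∀ z : Option X, ¬ r.lt none z := fun z h => not_top_lt ((hlt _ _).mp h)
  refine ⟨r, ?_, fun z => (hle z none).mpr le_top⟩
  apply TopologicalSpace.ext
  funext U
  apply propext
  constructor
  · -- generated open → filterTop open
    intro hgen
    have hgen' : TopologicalSpace.GenerateOpen
        {S : Set (Option X) | ∃ a : Option X, S = {z | r.lt z a} ∨ S = {z | r.lt a z}} U := hgen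
    clear hgen
    induction hgen' with
    | basic s hs =>
      obtain ⟨a, rfl | rfl⟩ := hs
      · intro hmem
        exact absurd hmem (hnlt a)
      · intro hmem
        match a with
        | none => exact absurd hmem (hnlt none)
        | some x₀ =>
          rw [hp]
          have hset : ({x : X | r.lt (some x₀) (some x)} : Set X) =
              Option.some ⁻¹' {z | r.lt (some x₀) z} := rfl
          have hcompl : (Option.some ⁻¹' {z | r.lt (some x₀) z})ᶜ = {x : X | e x ≤ e x₀} := by
            ext x
            simp only [Set.mem_compl_iff, Set.mem_preimage, Set.mem_setOf_eq]
            rw [hlt_some]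
            exact not_lt
          rw [hcompl]
          have : #({x : X | e x ≤ e x₀}) = #(Set.Iic (e x₀)) :=
            Cardinal.mk_congr (e.subtypeEquiv (fun x => Iff.rfl))
          rw [this]
          exact hIic (e x₀)
    | univ => intro _; simp
    | inter U V _ _ ihU ihV =>
      intro h
      rw [Set.preimage_inter]
      exact Filter.inter_mem (ihU h.1) (ihV h.2)
    | sUnion S _ ih =>
      intro h
      rw [Set.mem_sUnion] at h
      obtain ⟨V, hVS, hV⟩ := h
      exact Filter.mem_of_superset (ih V hVS hV)
        (Set.preimage_mono (Set.subset_sUnion_of_mem hVS))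
  · -- filterTop open → generated open
    intro hfo
    show TopologicalSpace.GenerateOpen _ U
    have hsingle : ∀ x : X, TopologicalSpace.GenerateOpen
        {S : Set (Option X) | ∃ a : Option X, S = {z | r.lt z a} ∨ S = {z | r.lt a z}}
        {some x} := by
      intro x
      obtain ⟨zs, hzs⟩ := hsucc (e x)
      rcases hpred (e x) with hmin | ⟨w, hw⟩
      · have heq : ({(some x : Option X)} : Set (Option X)) =
            {z | r.lt z (some (e.symm zs))} := by
          ext z
          simp only [Set.mem_singleton_iff, Set.mem_setOf_eq]
          constructor
          · rintro rfl
            rw [hlt_some, e.apply_symm_apply]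
            exact hzs.1
          · intro hz
            match z with
            | none => exact absurd hz (fun h => not_top_lt ((hlt _ _).mp h))
            | some x' =>
              rw [hlt_some, e.apply_symm_apply] at hz
              have h1 : ¬ e x < e x' := fun hlt' => hzs.2 hlt' hz
              have h2 : ¬ e x' < e x := hmin (e x')
              have : e x' = e x := le_antisymm (not_lt.mp h1) (not_lt.mp h2)
              rw [e.injective this]
        rw [heq]
        exact TopologicalSpace.GenerateOpen.basic _ ⟨some (e.symm zs), Or.inl rfl⟩
      · have heq : ({(some x : Option X)} : Set (Option X)) =
            {z | r.lt (some (e.symm w)) z} ∩ {z | r.lt z (some (e.symm zs))} := by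
          ext z
          simp only [Set.mem_singleton_iff, Set.mem_inter_iff, Set.mem_setOf_eq]
          constructor
          · rintro rfl
            constructor
            · rw [hlt_some, e.apply_symm_apply]
              exact hw.1
            · rw [hlt_some, e.apply_symm_apply]
              exact hzs.1
          · rintro ⟨hz1, hz2⟩
            match z with
            | none => exact absurd hz2 (fun h => not_top_lt ((hlt _ _).mp h))
            | some x' =>
              rw [hlt_some, e.apply_symm_apply] at hz1 hz2
              have h1 : ¬ e x < e x' := fun hlt' => hzs.2 hlt' hz2
              have h2 : ¬ e x' < e x := fun hlt' => hw.2 hz1 hlt'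
              have : e x' = e x := le_antisymm (not_lt.mp h1) (not_lt.mp h2)
              rw [e.injective this]
        rw [heq]
        exact TopologicalSpace.GenerateOpen.inter _ _
          (TopologicalSpace.GenerateOpen.basic _ ⟨some (e.symm w), Or.inr rfl⟩)
          (TopologicalSpace.GenerateOpen.basic _ ⟨some (e.symm zs), Or.inl rfl⟩)
    by_cases hnone : (none : Option X) ∈ U
    · have hP : Option.some ⁻¹' U ∈ p := hfo hnone
      have hPc : #(↥((Option.some ⁻¹' U)ᶜ)) < κ := (hp _).mp hP
      obtain ⟨bY, hbY⟩ := hbdd (e '' ((Option.some ⁻¹' U)ᶜ))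
        (lt_of_le_of_lt Cardinal.mk_image_le hPc)
      have hUeq : U = ⋃₀ (insert {z | r.lt (some (e.symm bY)) z}
          ((fun x => ({some x} : Set (Option X))) '' (Option.some ⁻¹' U))) := by
        ext z
        rw [Set.mem_sUnion]
        constructor
        · intro hz
          match z with
          | none =>
            refine ⟨{z | r.lt (some (e.symm bY)) z}, Set.mem_insert _ _, ?_⟩
            exact hlt_top _
          | some x =>
            exact ⟨{some x}, Set.mem_insert_of_mem _ ⟨x, hz, rfl⟩, rfl⟩
        · rintro ⟨s, hs, hzs⟩
          rcases Set.mem_insert_iff.mp hs with rfl | ⟨x, hx, rfl⟩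
          · match z with
            | none => exact hnone
            | some x' =>
              have hz' : r.lt (some (e.symm bY)) (some x') := hzs
              rw [hlt_some, e.apply_symm_apply] at hz'
              by_contra hxU
              have hmem : e x' ∈ e '' ((Option.some ⁻¹' U)ᶜ) := ⟨x', hxU, rfl⟩
              exact absurd (hbY hmem) (not_le.mpr hz')
          · rw [Set.mem_singleton_iff] at hzs
            subst hzs
            exact hx
      rw [hUeq]
      apply TopologicalSpace.GenerateOpen.sUnion
      intro s hs
      rcases Set.mem_insert_iff.mp hs with rfl | ⟨x, _, rfl⟩
      · exact TopologicalSpace.GenerateOpen.basic _ ⟨some (e.symm bY), Or.inr rfl⟩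
      · exact hsingle x
    · have hUeq : U = ⋃₀ ((fun x => ({some x} : Set (Option X))) '' (Option.some ⁻¹' U)) := by
        ext z
        rw [Set.mem_sUnion]
        constructor
        · intro hz
          match z with
          | none => exact absurd hz hnone
          | some x => exact ⟨{some x}, ⟨x, hz, rfl⟩, rfl⟩
        · rintro ⟨s, ⟨x, hx, rfl⟩, hzs⟩
          rw [Set.mem_singleton_iff] at hzs
          subst hzs
          exact hx
      rw [hUeq]
      apply TopologicalSpace.GenerateOpen.sUnion
      rintro s ⟨x, _, rfl⟩
      exact hsingle x

end Stmt8Construct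
section Stmt8Main2

open Cardinal

private lemma stmt8_main2 {X : Type u} {κ : Cardinal.{u}} (hκ : Cardinal.aleph0 ≤ κ)
    (p : Filter X) (hp : ∀ A : Set X, A ∈ p ↔ #(↥(Aᶜ)) < κ)
    (hX : #X = κ) (hreg : κ.ord.cof = κ) :
    POrderable (filterTop p) (none : Option X) := by
  rcases eq_or_lt_of_le hκ with heq | huncount
  · -- κ = ℵ₀, use Y = ULift ℕ
    obtain ⟨e⟩ := Cardinal.eq.mp
      (show #X = #(ULift.{u} ℕ) by rw [hX, ← heq, Cardinal.mk_denumerable])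
    refine stmt8_constructA hκ p hp e ?_ ?_ ?_ ?_
    · intro y
      refine ⟨⟨y.down + 1⟩, show y.down < y.down + 1 by omega, ?_⟩
      intro c h1 h2
      have a1 : y.down < c.down := h1
      have a2 : c.down < y.down + 1 := h2
      omega
    · intro y
      by_cases h0 : y.down = 0
      · left
        intro w hw
        have : w.down < y.down := hw
        omega
      · right
        refine ⟨⟨y.down - 1⟩, show y.down - 1 < y.down by omega, ?_⟩
        intro c h1 h2
        have a1 : y.down - 1 < c.down := h1
        have a2 : c.down < y.down := h2
        omega
    · intro y
      have hsub : Set.Iic y ⊆ (fun n : ULift.{u} ℕ => n.down) ⁻¹' (Set.Iic y.down) :=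
        fun z hz => hz
      have hfin : (Set.Iic y).Finite := by
        refine Set.Finite.subset (Set.Finite.preimage ?_ (Set.finite_Iic y.down)) hsub
        exact fun a _ b _ h => ULift.down_injective h
      rw [← heq]
      exact hfin.lt_aleph0
    · intro S hS
      rw [← heq] at hS
      exact (Cardinal.lt_aleph0_iff_set_finite.mp hS).bddAbove
  · -- ℵ₀ < κ, use Y = Lex (κ.ord.ToType × ULift ℤ)
    haveI := stmt8_isWellOrder_toType κ.ord
    have hY : #(Lex (κ.ord.ToType × ULift.{u} ℤ)) = κ := by
      have h1 : #(Lex (κ.ord.ToType × ULift.{u} ℤ)) = #(κ.ord.ToType × ULift.{u} ℤ) :=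
        Cardinal.mk_congr (ofLex : Lex _ ≃ _)
      rw [h1, Cardinal.mk_prod, Cardinal.lift_id, Cardinal.lift_id, Cardinal.mk_toType,
        Cardinal.card_ord, Cardinal.mk_denumerable, Cardinal.mul_aleph0_eq hκ]
    obtain ⟨e⟩ := Cardinal.eq.mp (hX.trans hY.symm)
    refine stmt8_constructA hκ p hp e ?_ ?_ ?_ ?_
    · intro y
      refine ⟨toLex ((ofLex y).1, ⟨(ofLex y).2.down + 1⟩), ?_, ?_⟩
      · rw [show y = toLex (ofLex y) from rfl, Prod.Lex.lt_iff]
        exact Or.inr ⟨rfl, show (ofLex y).2.down < (ofLex y).2.down + 1 by omega⟩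
      · intro c h1 h2
        rw [show y = toLex (ofLex y) from rfl, show c = toLex (ofLex c) from rfl,
          Prod.Lex.lt_iff] at h1
        rw [show c = toLex (ofLex c) from rfl, Prod.Lex.lt_iff] at h2
        rcases h1 with h1 | ⟨h1e, h1s⟩ <;> rcases h2 with h2 | ⟨h2e, h2s⟩
        · exact absurd h2 (asymm h1)
        · rw [h2e] at h1; exact absurd h1 (lt_irrefl _)
        · exact absurd h2 (not_lt.mpr (le_of_eq h1e))
        · have a1 : (ofLex y).2.down < (ofLex c).2.down := h1s
          have a2 : (ofLex c).2.down < (ofLex y).2.down + 1 := h2s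
          omega
    · intro y
      right
      refine ⟨toLex ((ofLex y).1, ⟨(ofLex y).2.down - 1⟩), ?_, ?_⟩
      · rw [show y = toLex (ofLex y) from rfl, Prod.Lex.lt_iff]
        exact Or.inr ⟨rfl, show (ofLex y).2.down - 1 < (ofLex y).2.down by omega⟩
      · intro c h1 h2
        rw [show c = toLex (ofLex c) from rfl, Prod.Lex.lt_iff] at h1
        rw [show y = toLex (ofLex y) from rfl, show c = toLex (ofLex c) from rfl,
          Prod.Lex.lt_iff] at h2
        rcases h1 with h1 | ⟨h1e, h1s⟩ <;> rcases h2 with h2 | ⟨h2e, h2s⟩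
        · exact absurd h2 (asymm h1)
        · rw [h2e] at h1; exact absurd h1 (lt_irrefl _)
        · exact absurd h2 (not_lt.mpr (le_of_eq h1e))
        · have a1 : (ofLex y).2.down - 1 < (ofLex c).2.down := h1s
          have a2 : (ofLex c).2.down < (ofLex y).2.down := h2s
          omega
    · intro y
      have hf : Function.Injective (fun z : ↥(Set.Iic y) =>
          ((⟨(ofLex z.1).1, by
            have hz : toLex (ofLex z.1) ≤ toLex (ofLex y) := Set.mem_Iic.mp z.2
            rcases Prod.Lex.le_iff.mp hz with h | ⟨h, _⟩
            · exact Set.mem_Iic.mpr (le_of_lt h)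
            · exact Set.mem_Iic.mpr (le_of_eq h)⟩ : ↥(Set.Iic (ofLex y).1)),
            (ofLex z.1).2)) := by
        intro u v huv
        have h1 : (ofLex u.1).1 = (ofLex v.1).1 := congrArg (fun t => t.1.1) huv
        have h2 : (ofLex u.1).2 = (ofLex v.1).2 := congrArg (fun t => t.2) huv
        apply Subtype.ext
        rw [show u.1 = toLex (ofLex u.1) from rfl, show v.1 = toLex (ofLex v.1) from rfl]
        exact congrArg toLex (Prod.ext h1 h2)
      have h1 := Cardinal.mk_le_of_injective hf
      have h2 : #(↥(Set.Iic (ofLex y).1) × ULift.{u} ℤ) = #(Set.Iic (ofLex y).1) * Cardinal.aleph0 := by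
        rw [Cardinal.mk_prod, Cardinal.lift_id, Cardinal.lift_id]
        congr 1
        exact Cardinal.mk_denumerable _
      refine lt_of_le_of_lt (h1.trans_eq h2) ?_
      exact Cardinal.mul_lt_of_lt hκ (stmt8_mk_Iic_toType_lt hκ _) huncount
    · intro S hS
      have hcard : #((fun z : Lex (κ.ord.ToType × ULift.{u} ℤ) => (ofLex z).1) '' S) <
          (Ordinal.type ((· < ·) : κ.ord.ToType → κ.ord.ToType → Prop)).cof := by
        rw [Ordinal.type_toType, hreg]
        exact lt_of_le_of_lt Cardinal.mk_image_le hS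
      obtain ⟨abnd, habnd⟩ : ∃ a, ∀ b ∈ (fun z : Lex (κ.ord.ToType × ULift.{u} ℤ) => (ofLex z).1) '' S,
          b < a := by
        by_contra hne
        push_neg at hne
        have hc := Order.cof_le (s := (fun z : Lex (κ.ord.ToType × ULift.{u} ℤ) => (ofLex z).1) '' S)
          (fun a => hne a)
        rw [Ordinal.cof_toType, hreg] at hc
        exact absurd hcard (not_lt.mpr (by rwa [Ordinal.type_toType, hreg]))
      refine ⟨toLex (abnd, ⟨0⟩), ?_⟩
      intro z hz
      have hlt : (ofLex z).1 < abnd := habnd _ ⟨z, hz, rfl⟩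
      rw [show z = toLex (ofLex z) from rfl, Prod.Lex.le_iff]
      exact Or.inl hlt

end Stmt8Main2
section Stmt8Main1

open Cardinal

private lemma stmt8_main1 {X : Type u} {κ : Cardinal.{u}} (hκ : Cardinal.aleph0 ≤ κ)
    (hκX : κ ≤ #X)
    (p : Filter X) (hp : ∀ A : Set X, A ∈ p ↔ #(↥(Aᶜ)) < κ)
    (h : Orderable (filterTop p)) :
    Cardinal.mk X = κ ∧ κ.ord.cof = κ := by
  obtain ⟨r, hr⟩ := h
  letI := r
  set A' : Set (Option X) := {z | z < none} with hA'def
  set B' : Set (Option X) := {z | none < z} with hB'def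
  have hgens : ∀ s, s ∈ {S : Set (Option X) | ∃ a : Option X,
      S = {z | r.lt z a} ∨ S = {z | r.lt a z}} → (filterTop p).IsOpen s := by
    intro s hs
    rw [← hr]
    exact TopologicalSpace.GenerateOpen.basic _ hs
  have hsmallA : ∀ a : Option X, a < none → #{x : X | (some x : Option X) ≤ a} < κ := by
    intro a ha
    have hopen := hgens {z | r.lt a z} ⟨a, Or.inr rfl⟩
    have hmem : Option.some ⁻¹' {z | r.lt a z} ∈ p := hopen ha
    have hcompl : (Option.some ⁻¹' {z | r.lt a z})ᶜ = {x : X | (some x : Option X) ≤ a} := by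
      ext x
      simp only [Set.mem_compl_iff, Set.mem_preimage, Set.mem_setOf_eq]
      exact not_lt
    have := (hp _).mp hmem
    rwa [hcompl] at this
  have hsmallB : ∀ b : Option X, none < b → #{x : X | b ≤ (some x : Option X)} < κ := by
    intro b hb
    have hopen := hgens {z | r.lt z b} ⟨b, Or.inl rfl⟩
    have hmem : Option.some ⁻¹' {z | r.lt z b} ∈ p := hopen hb
    have hcompl : (Option.some ⁻¹' {z | r.lt z b})ᶜ = {x : X | b ≤ (some x : Option X)} := by
      ext x
      simp only [Set.mem_compl_iff, Set.mem_preimage, Set.mem_setOf_eq]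
      exact not_lt
    have := (hp _).mp hmem
    rwa [hcompl] at this
  -- Iic bounds in A'
  have hIicA : ∀ a : ↥A', #(Set.Iic a) < κ := by
    intro a
    refine lt_of_le_of_lt ?_ (hsmallA a.1 a.2)
    have key : ∀ w : ↥(Set.Iic a), ∃ x : X, (some x : Option X) = w.1.1 := by
      rintro ⟨⟨z, hz⟩, hw⟩
      match z with
      | none => exact absurd hz (lt_irrefl _)
      | some x => exact ⟨x, rfl⟩
    choose g hg using key
    have hmem : ∀ w : ↥(Set.Iic a), g w ∈ {x : X | (some x : Option X) ≤ a.1} := by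
      intro w
      show (some (g w) : Option X) ≤ a.1
      rw [hg w]
      exact Subtype.coe_le_coe.mpr (Set.mem_Iic.mp w.2)
    refine Cardinal.mk_le_of_injective (f := fun w => ⟨g w, hmem w⟩) ?_
    intro w w' hww
    have h1 : g w = g w' := congrArg Subtype.val hww
    have h2 : w.1.1 = w'.1.1 := by rw [← hg w, ← hg w', h1]
    exact Subtype.ext (Subtype.ext h2)
  have hIciB : ∀ b : ↥B', #(Set.Ici b) < κ := by
    intro b
    refine lt_of_le_of_lt ?_ (hsmallB b.1 b.2)
    have key : ∀ w : ↥(Set.Ici b), ∃ x : X, (some x : Option X) = w.1.1 := by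
      rintro ⟨⟨z, hz⟩, hw⟩
      match z with
      | none => exact absurd hz (lt_irrefl _)
      | some x => exact ⟨x, rfl⟩
    choose g hg using key
    have hmem : ∀ w : ↥(Set.Ici b), g w ∈ {x : X | b.1 ≤ (some x : Option X)} := by
      intro w
      show b.1 ≤ (some (g w) : Option X)
      rw [hg w]
      exact Subtype.coe_le_coe.mpr (Set.mem_Ici.mp w.2)
    refine Cardinal.mk_le_of_injective (f := fun w => ⟨g w, hmem w⟩) ?_
    intro w w' hww
    have h1 : g w = g w' := congrArg Subtype.val hww
    have h2 : w.1.1 = w'.1.1 := by rw [← hg w, ← hg w', h1]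
    exact Subtype.ext (Subtype.ext h2)
  -- boundedness in A'
  have hbddA : ∀ S : Set ↥A', S.Nonempty → #S < κ → BddAbove S := by
    intro S hne hcard
    set Sob : Set (Option X) := Subtype.val '' S with hSobdef
    have hnoneSob : none ∉ Sob := by
      rintro ⟨w, hw, hww⟩
      have := w.2
      rw [hww] at this
      exact lt_irrefl _ this
    have hSX : #(Option.some ⁻¹' Sob) < κ := by
      rw [stmt8_mk_some_preimage hnoneSob, Cardinal.mk_image_eq Subtype.val_injective]
      exact hcard
    have hopen : (filterTop p).IsOpen Sobᶜ := by
      intro _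
      rw [hp, Set.preimage_compl, compl_compl]
      exact hSX
    have hgen : TopologicalSpace.GenerateOpen {S : Set (Option X) | ∃ a : Option X,
        S = {z | r.lt z a} ∨ S = {z | r.lt a z}} Sobᶜ := by
      rw [← hr] at hopen
      exact hopen
    obtain ⟨L, R, hL, hR, hzLR, hsub⟩ := stmt8_exists_interval hgen none hnoneSob
    have hsR : ∀ s : ↥A', s ∈ S → s.1 ∈ R := by
      intro s _
      rcases hR with rfl | ⟨b, rfl⟩
      · trivial
      · exact lt_trans s.2 hzLR.2
    rcases hL with rfl | ⟨a, rfl⟩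
    · obtain ⟨s₀, hs₀⟩ := hne
      have hcon : s₀.1 ∈ Sobᶜ := hsub ⟨trivial, hsR s₀ hs₀⟩
      exact absurd (Set.mem_image_of_mem _ hs₀) hcon
    · have haA : a ∈ A' := hzLR.1
      refine ⟨⟨a, haA⟩, ?_⟩
      intro s hs
      have hnotin : s.1 ∉ Sobᶜ := fun hcon => hcon (Set.mem_image_of_mem _ hs)
      have h3 : s.1 ∉ {z : Option X | a < z} := fun hcon => hnotin (hsub ⟨hcon, hsR s hs⟩)
      exact Subtype.coe_le_coe.mp (not_lt.mp h3)
  have hbddB : ∀ S : Set ↥B', S.Nonempty → #S < κ → BddBelow S := by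
    intro S hne hcard
    set Sob : Set (Option X) := Subtype.val '' S with hSobdef
    have hnoneSob : none ∉ Sob := by
      rintro ⟨w, hw, hww⟩
      have := w.2
      rw [hww] at this
      exact lt_irrefl _ this
    have hSX : #(Option.some ⁻¹' Sob) < κ := by
      rw [stmt8_mk_some_preimage hnoneSob, Cardinal.mk_image_eq Subtype.val_injective]
      exact hcard
    have hopen : (filterTop p).IsOpen Sobᶜ := by
      intro _
      rw [hp, Set.preimage_compl, compl_compl]
      exact hSX
    have hgen : TopologicalSpace.GenerateOpen {S : Set (Option X) | ∃ a : Option X,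
        S = {z | r.lt z a} ∨ S = {z | r.lt a z}} Sobᶜ := by
      rw [← hr] at hopen
      exact hopen
    obtain ⟨L, R, hL, hR, hzLR, hsub⟩ := stmt8_exists_interval hgen none hnoneSob
    have hsL : ∀ s : ↥B', s ∈ S → s.1 ∈ L := by
      intro s _
      rcases hL with rfl | ⟨a, rfl⟩
      · trivial
      · exact lt_trans hzLR.1 s.2
    rcases hR with rfl | ⟨b, rfl⟩
    · obtain ⟨s₀, hs₀⟩ := hne
      have hcon : s₀.1 ∈ Sobᶜ := hsub ⟨hsL s₀ hs₀, trivial⟩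
      exact absurd (Set.mem_image_of_mem _ hs₀) hcon
    · have hbB : b ∈ B' := hzLR.2
      refine ⟨⟨b, hbB⟩, ?_⟩
      intro s hs
      have hnotin : s.1 ∉ Sobᶜ := fun hcon => hcon (Set.mem_image_of_mem _ hs)
      have h3 : s.1 ∉ {z : Option X | z < b} := fun hcon => hnotin (hsub ⟨hsL s hs, hcon⟩)
      exact Subtype.coe_le_coe.mp (not_lt.mp h3)
  obtain ⟨hAle, hAreg⟩ := stmt8_combinC hκ hIicA hbddA
  obtain ⟨hBle, hBreg⟩ := stmt8_combinC_dual hκ hIciB hbddB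
  have hnoneA : none ∉ A' := lt_irrefl _
  have hnoneB : none ∉ B' := lt_irrefl _
  have hcover : (Set.univ : Set X) ⊆ (Option.some ⁻¹' A') ∪ (Option.some ⁻¹' B') := by
    intro x _
    rcases lt_or_gt_of_ne (Option.some_ne_none x) with h | h
    · exact Or.inl h
    · exact Or.inr h
  have hXle : #X ≤ #(↥A') + #(↥B') := by
    calc #X = #(Set.univ : Set X) := Cardinal.mk_univ.symm
    _ ≤ #((Option.some ⁻¹' A') ∪ (Option.some ⁻¹' B') : Set X) :=
        Cardinal.mk_le_mk_of_subset hcover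
    _ ≤ #(Option.some ⁻¹' A') + #(Option.some ⁻¹' B') := Cardinal.mk_union_le _ _
    _ = #(↥A') + #(↥B') := by
        rw [stmt8_mk_some_preimage hnoneA, stmt8_mk_some_preimage hnoneB]
  have hXκ : #X = κ := by
    refine le_antisymm ?_ hκX
    refine hXle.trans ?_
    calc #(↥A') + #(↥B') ≤ κ + κ := add_le_add hAle hBle
    _ = κ := Cardinal.add_eq_self hκ
  refine ⟨hXκ, ?_⟩
  by_cases hA : κ ≤ #(↥A')
  · exact hAreg hA
  · have hB : κ ≤ #(↥B') := by
      by_contra hB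
      push_neg at hA hB
      have hlt := Cardinal.add_lt_of_lt hκ hA hB
      exact absurd (hκX.trans hXle) (not_le.mpr hlt)
    exact hBreg hB

end Stmt8Main1
/-- For an infinite cardinal `κ ≤ |X|` and the filter
`p^κ = {A ⊆ X : |X \ A| < κ}`, the following are equivalent:
(a) `X_{p^κ}` is `p^κ`-orderable; (b) `X_{p^κ}` is orderable;
(c) `|X| = κ` and `κ` is regular. -/
theorem stmt8 {X : Type u} (κ : Cardinal.{u}) (hκ : Cardinal.aleph0 ≤ κ)
    (hκX : κ ≤ Cardinal.mk X)
    (p : Filter X) (hp : ∀ A : Set X, A ∈ p ↔ Cardinal.mk ↥(Aᶜ) < κ) :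
    (POrderable (filterTop p) (none : Option X) ↔ (Cardinal.mk X = κ ∧ κ.ord.cof = κ)) ∧
    (Orderable (filterTop p) ↔ (Cardinal.mk X = κ ∧ κ.ord.cof = κ)) := by
  have main2 : (Cardinal.mk X = κ ∧ κ.ord.cof = κ) →
      POrderable (filterTop p) (none : Option X) :=
    fun h => stmt8_main2 hκ p hp h.1 h.2
  have main1 : Orderable (filterTop p) → (Cardinal.mk X = κ ∧ κ.ord.cof = κ) :=
    fun h => stmt8_main1 hκ hκX p hp h
  have hPO : POrderable (filterTop p) (none : Option X) → Orderable (filterTop p) := by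
    rintro ⟨r, h1, _⟩
    exact ⟨r, h1⟩
  exact ⟨⟨fun h => main1 (hPO h), main2⟩, ⟨main1, fun h => hPO (main2 h)⟩⟩
end

section
/- Let κ, λ and μ be infinite cardinals such that λ is regular and κ ≤ λ ≤ μ. Then there exist a set Z with |Z| = μ and a free filter p on Z such that the filter space Z_p is weakly orderable, a(Z_p) = κ and ψ(Z_p) = λ. If, moreover, κ is regular, then p can be chosen so that Z_p is orderable. -/
open Set

universe u v w y

universe uu
namespace Stmt9
open Cardinal Ordinal Sum Set

abbrev IZ : Type u := ULift.{u} ℤ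
abbrev KT (κ : Cardinal.{u}) : Type u := κ.ord.ToType
abbrev LT' (lam : Cardinal.{u}) : Type u := lam.ord.ToType
abbrev JT (μ : Cardinal.{u}) : Type u := μ.ord.ToType
abbrev AT (κ μ : Cardinal.{u}) : Type u := (JT μ ⊕ KT κ) × IZ
abbrev BT (lam : Cardinal.{u}) : Type u := LT' lam × IZ
abbrev ZT (κ lam μ : Cardinal.{u}) : Type u := AT κ μ ⊕ BT lam
abbrev AL (κ μ : Cardinal.{u}) : Type u := Lex ((JT μ ⊕ₗ KT κ) × IZ)
abbrev TT (κ lam μ : Cardinal.{u}) : Type u :=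
  Lex (WithTop (AL κ μ) ⊕ (Lex (BT lam))ᵒᵈ)

variable {κ lam μ : Cardinal.{u}}

def embA (x : AT κ μ) : AL κ μ := toLex (toLex x.1, x.2)

def emb : Option (ZT κ lam μ) → TT κ lam μ
  | none => toLex (Sum.inl (⊤ : WithTop (AL κ μ)))
  | some (Sum.inl a) => toLex (Sum.inl ((embA a : AL κ μ) : WithTop (AL κ μ)))
  | some (Sum.inr b) => toLex (Sum.inr (OrderDual.toDual (toLex b)))

lemma embA_inj : Function.Injective (embA (κ := κ) (μ := μ)) := by
  intro x y h
  unfold embA at h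
  have h2 : ((toLex x.1, x.2) : _ × _) = (toLex y.1, y.2) := toLex.injective h
  obtain ⟨x1, x2⟩ := x; obtain ⟨y1, y2⟩ := y
  simp only [Prod.mk.injEq] at h2
  exact Prod.ext (toLex.injective h2.1) h2.2

lemma emb_inj : Function.Injective (emb (κ := κ) (lam := lam) (μ := μ)) := by
  intro x y h
  match x, y with
  | none, none => rfl
  | some (Sum.inl a), some (Sum.inl b) =>
    simp only [emb] at h
    have h1 := toLex.injective h
    have h2 : ((embA a : AL κ μ) : WithTop (AL κ μ)) = (embA b : AL κ μ) := by
      exact Sum.inl.inj h1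
    exact congrArg _ (congrArg _ (embA_inj (WithTop.coe_injective h2)))
  | some (Sum.inr a), some (Sum.inr b) =>
    simp only [emb] at h
    have h1 := toLex.injective h
    have h2 : OrderDual.toDual (toLex a) = OrderDual.toDual (toLex b) := Sum.inr.inj h1
    exact congrArg _ (congrArg _ (toLex.injective (OrderDual.toDual_inj.1 h2)))
  | none, some (Sum.inl a) =>
    have h1 := toLex.injective h
    exact absurd (Sum.inl.inj h1).symm (WithTop.coe_ne_top)
  | some (Sum.inl a), none =>
    have h1 := toLex.injective h
    exact absurd (Sum.inl.inj h1) (WithTop.coe_ne_top)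
  | none, some (Sum.inr b) => exact absurd (toLex.injective h) Sum.inl_ne_inr
  | some (Sum.inr b), none => exact absurd (toLex.injective h) Sum.inr_ne_inl
  | some (Sum.inl a), some (Sum.inr b) => exact absurd (toLex.injective h) Sum.inl_ne_inr
  | some (Sum.inr b), some (Sum.inl a) => exact absurd (toLex.injective h) Sum.inr_ne_inl

noncomputable def rZ (κ lam μ : Cardinal.{u}) : LinearOrder (Option (ZT κ lam μ)) :=
  LinearOrder.lift' emb emb_inj

lemma rZ_lt_iff {x y : Option (ZT κ lam μ)} :
    (rZ κ lam μ).lt x y ↔ emb x < emb y := Iff.rfl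

/-! ### lt characterizations -/

lemma lt_A_none (a : AT κ μ) : emb (some (Sum.inl a)) < (emb none : TT κ lam μ) := by
  show toLex _ < toLex _
  rw [Sum.Lex.toLex_lt_toLex]
  exact Sum.Lex.inl (WithTop.coe_lt_top _)

lemma lt_none_B (b : BT lam) : (emb none : TT κ lam μ) < emb (some (Sum.inr b)) := by
  show toLex _ < toLex _
  rw [Sum.Lex.toLex_lt_toLex]
  exact Sum.Lex.sep _ _

lemma lt_A_B (a : AT κ μ) (b : BT lam) :
    (emb (some (Sum.inl a)) : TT κ lam μ) < emb (some (Sum.inr b)) := by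
  show toLex _ < toLex _
  rw [Sum.Lex.toLex_lt_toLex]
  exact Sum.Lex.sep _ _

lemma lt_A_A {a a' : AT κ μ} :
    (emb (some (Sum.inl a)) : TT κ lam μ) < emb (some (Sum.inl a')) ↔ embA a < embA a' := by
  show toLex _ < toLex _ ↔ _
  rw [Sum.Lex.toLex_lt_toLex, Sum.lex_inl_inl]
  exact WithTop.coe_lt_coe

lemma lt_B_B {b b' : BT lam} :
    (emb (some (Sum.inr b)) : TT κ lam μ) < emb (some (Sum.inr b')) ↔ toLex b' < toLex b := by
  show toLex _ < toLex _ ↔ _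
  rw [Sum.Lex.toLex_lt_toLex, Sum.lex_inr_inr]
  exact OrderDual.toDual_lt_toDual

lemma not_lt_none_A (a : AT κ μ) : ¬ ((emb none : TT κ lam μ) < emb (some (Sum.inl a))) := by
  show ¬ toLex _ < toLex _
  rw [Sum.Lex.toLex_lt_toLex, Sum.lex_inl_inl]
  exact not_top_lt

lemma not_lt_B_none (b : BT lam) : ¬ (emb (some (Sum.inr b)) < (emb none : TT κ lam μ)) := by
  show ¬ toLex _ < toLex _
  rw [Sum.Lex.toLex_lt_toLex]
  exact fun h => by cases h

lemma not_lt_B_A (b : BT lam) (a : AT κ μ) :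
    ¬ ((emb (some (Sum.inr b)) : TT κ lam μ) < emb (some (Sum.inl a))) := by
  show ¬ toLex _ < toLex _
  rw [Sum.Lex.toLex_lt_toLex]
  exact fun h => by cases h

lemma embA_lt_iff {a a' : AT κ μ} :
    embA a < embA a' ↔ (toLex a.1 < toLex a'.1 ∨ (a.1 = a'.1 ∧ a.2 < a'.2)) := by
  unfold embA
  rw [Prod.Lex.lt_iff]
  constructor
  · rintro (h | ⟨h1, h2⟩)
    · exact Or.inl h
    · exact Or.inr ⟨toLex.injective h1, h2⟩
  · rintro (h | ⟨h1, h2⟩)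
    · exact Or.inl h
    · exact Or.inr ⟨congrArg toLex h1, h2⟩

/-! ### The injections and the filter -/

def gK (x : KT κ × IZ) : ZT κ lam μ := Sum.inl (Sum.inr x.1, x.2)
def gJ (x : JT μ × IZ) : ZT κ lam μ := Sum.inl (Sum.inl x.1, x.2)

lemma gK_inj : Function.Injective (gK (κ := κ) (lam := lam) (μ := μ)) := by
  intro x y h
  unfold gK at h
  obtain ⟨x1, x2⟩ := x; obtain ⟨y1, y2⟩ := y
  simp_all

lemma gJ_inj : Function.Injective (gJ (κ := κ) (lam := lam) (μ := μ)) := by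
  intro x y h
  unfold gJ at h
  obtain ⟨x1, x2⟩ := x; obtain ⟨y1, y2⟩ := y
  simp_all

/-- the bad set of `P` on the K-side -/
def badK (P : Set (ZT κ lam μ)) : Set (KT κ) := {k | ∃ n : IZ, gK (lam := lam) (μ := μ) (k, n) ∉ P}

/-- membership predicate of the filter -/
def memP (κ lam μ : Cardinal.{u}) (P : Set (ZT κ lam μ)) : Prop :=
  #(badK P) < κ ∧ ∃ t : BT lam, ∀ s : BT lam, toLex t < toLex s → Sum.inr s ∈ P

lemma badK_mono {P Q : Set (ZT κ lam μ)} (h : P ⊆ Q) : badK Q ⊆ badK P :=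
  fun k ⟨n, hn⟩ => ⟨n, fun hP => hn (h hP)⟩

def pF (κ lam μ : Cardinal.{u}) (hκ : Cardinal.aleph0 ≤ κ) (hlam : Cardinal.aleph0 ≤ lam) :
    Filter (ZT κ lam μ) where
  sets := {P | memP κ lam μ P}
  univ_sets := by
    have hne : Nonempty (LT' lam) := Ordinal.toType_nonempty_iff_ne_zero.2 (by
      intro h
      have := Cardinal.ord_eq_zero.mp h
      exact (Cardinal.aleph0_pos.trans_le hlam).ne' (by simpa using this))
    obtain ⟨t0⟩ := hne
    refine ⟨?_, ⟨(t0, ULift.up 0), fun s _ => trivial⟩⟩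
    have : badK (κ := κ) (lam := lam) (μ := μ) Set.univ = ∅ := by
      ext x; simp [badK]
    rw [this]
    simpa using Cardinal.aleph0_pos.trans_le hκ
  sets_of_superset := by
    rintro P Q ⟨h1, t, h2⟩ hPQ
    exact ⟨lt_of_le_of_lt (Cardinal.mk_le_mk_of_subset (badK_mono hPQ)) h1,
      t, fun s hs => hPQ (h2 s hs)⟩
  inter_sets := by
    rintro P Q ⟨h1, t1, h2⟩ ⟨h3, t2, h4⟩
    constructor
    · have : badK (κ := κ) (lam := lam) (μ := μ) (P ∩ Q) ⊆ badK P ∪ badK Q := by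
        rintro k ⟨n, hn⟩
        by_cases hP : gK (lam := lam) (μ := μ) (k, n) ∈ P
        · exact Or.inr ⟨n, fun hQ => hn ⟨hP, hQ⟩⟩
        · exact Or.inl ⟨n, hP⟩
      calc #(badK (κ := κ) (lam := lam) (μ := μ) (P ∩ Q)) ≤ #(badK P ∪ badK Q : Set _) :=
            Cardinal.mk_le_mk_of_subset this
        _ ≤ #(badK (κ := κ) (lam := lam) (μ := μ) P) + #(badK (κ := κ) (lam := lam) (μ := μ) Q) :=
            Cardinal.mk_union_le _ _
        _ < κ := Cardinal.add_lt_of_lt hκ h1 h3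
    · refine ⟨ofLex (max (toLex t1) (toLex t2)), fun s hs => ?_⟩
      rw [toLex_ofLex] at hs
      exact ⟨h2 s (lt_of_le_of_lt (le_max_left _ _) hs),
        h4 s (lt_of_le_of_lt (le_max_right _ _) hs)⟩

lemma mem_pF {hκ : Cardinal.aleph0 ≤ κ} {hlam : Cardinal.aleph0 ≤ lam} {P : Set (ZT κ lam μ)} :
    P ∈ pF κ lam μ hκ hlam ↔ memP κ lam μ P := Iff.rfl

/-! ### basic facts -/

lemma toType_ne (hc : Cardinal.aleph0 ≤ c) : Nonempty c.ord.ToType :=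
  Ordinal.toType_nonempty_iff_ne_zero.2 (by
    intro h
    have := Cardinal.ord_eq_zero.mp h
    exact (Cardinal.aleph0_pos.trans_le hc).ne' (by simpa using this))

lemma succB_lt (b : BT lam) :
    toLex b < toLex ((b.1, ULift.up (b.2.down + 1)) : BT lam) := by
  rw [Prod.Lex.lt_iff]
  exact Or.inr ⟨rfl, show b.2.down < b.2.down + 1 from lt_add_one _⟩

lemma one_lt (hκ : Cardinal.aleph0 ≤ κ) : (1 : Cardinal.{u}) < κ :=
  lt_of_lt_of_le Cardinal.one_lt_aleph0 hκ

lemma pF_free (hκ : Cardinal.aleph0 ≤ κ) (hlam : Cardinal.aleph0 ≤ lam) :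
    IsFree (pF κ lam μ hκ hlam) := by
  constructor
  · rintro ⟨h1, t, h2⟩
    exact h2 _ (succB_lt t)
  · ext z
    simp only [Set.mem_sInter, Set.mem_setOf_eq, Set.mem_empty_iff_false, iff_false, not_forall]
    refine ⟨Set.univ \ {z}, ?_, by simp⟩
    rw [mem_pF]
    constructor
    · have hsub : badK (κ := κ) (lam := lam) (μ := μ) (Set.univ \ {z}) ⊆
          {k | ∃ n, gK (lam := lam) (μ := μ) (k, n) = z} := by
        rintro k ⟨n, hn⟩
        exact ⟨n, by by_contra hne; exact hn ⟨trivial, hne⟩⟩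
      refine lt_of_le_of_lt (Cardinal.mk_le_mk_of_subset hsub) ?_
      refine lt_of_le_of_lt ?_ (one_lt hκ)
      rw [Cardinal.le_one_iff_subsingleton]
      constructor
      rintro ⟨k1, n1, hn1⟩ ⟨k2, n2, hn2⟩
      have := gK_inj (hn1.trans hn2.symm)
      exact Subtype.ext (congrArg Prod.fst this)
    · obtain ⟨t0⟩ := toType_ne hlam
      match z with
      | Sum.inr s0 =>
        refine ⟨s0, fun s hs => ⟨trivial, fun he => ?_⟩⟩
        have : s = s0 := Sum.inr.inj he
        exact absurd hs (by rw [this]; exact lt_irrefl _)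
      | Sum.inl a =>
        exact ⟨(t0, ULift.up 0), fun s _ => ⟨trivial, fun he => by simp at he⟩⟩

/-- sets of size `< c` are strictly bounded in `c.ord.ToType` when `c` is regular -/
lemma bdd_lt {c : Cardinal.{u}} (hreg : c.ord.cof = c) {S : Set c.ord.ToType}
    (hS : #S < c) : ∃ t, ∀ s ∈ S, s < t := by
  haveI hwo : IsWellOrder c.ord.ToType (· < ·) := isWellOrder_lt
  have hc : Order.cof c.ord.ToType = c := by rw [Ordinal.cof_toType, hreg]
  by_contra hcon; push_neg at hcon
  exact absurd (Order.cof_le (s := S) hcon) (by rw [hc]; exact not_le.2 hS)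

/-- sets of size `< lam` are strictly lex-bounded in `BT lam` -/
lemma bdd_B {S : Set (BT lam)} (hreg : lam.ord.cof = lam)
    (hS : #S < lam) : ∃ t : BT lam, ∀ s ∈ S, toLex s < toLex t := by
  have h1 : #(Prod.fst '' S) < lam := lt_of_le_of_lt (Cardinal.mk_image_le) hS
  obtain ⟨t1, ht1⟩ := bdd_lt hreg h1
  refine ⟨(t1, ULift.up 0), fun s hs => ?_⟩
  rw [Prod.Lex.lt_iff]
  exact Or.inl (ht1 _ ⟨s, hs, rfl⟩)

lemma mk_Iic_lt (hκ : Cardinal.aleph0 ≤ κ) (k : KT κ) : #(Set.Iic k) < κ := by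
  have h1 : #(Set.Iio k) < κ := Cardinal.mk_Iio_ord_toType k
  have h2 : (Set.Iic k : Set (KT κ)) = insert k (Set.Iio k) := by
    ext x; simp [le_iff_lt_or_eq, or_comm]
  rw [h2, Cardinal.mk_insert (by simp)]
  exact Cardinal.add_lt_of_lt hκ h1 (one_lt hκ)

/-! ### closure characterization -/

lemma filterTop_isOpen_iff {X : Type u} (p : Filter X) (U : Set (Option X)) :
    (filterTop p).IsOpen U ↔ (none ∈ U → (Option.some ⁻¹' U) ∈ p) := Iff.rfl

lemma none_mem_closure_iff {X : Type u} (p : Filter X) (A : Set (Option X)) (hA : none ∉ A) :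
    (none ∈ @closure _ (filterTop p) A) ↔ ∀ P ∈ p, ∃ z ∈ P, some z ∈ A := by
  letI := filterTop p
  rw [mem_closure_iff]
  constructor
  · intro h P hP
    have hopen : (filterTop p).IsOpen ({none} ∪ Option.some '' P) := by
      rw [filterTop_isOpen_iff]
      intro _
      have : Option.some ⁻¹' ({none} ∪ Option.some '' P : Set (Option X)) = P := by
        ext z
        simp [Set.mem_preimage, Option.some_injective X |>.mem_set_image]
      rwa [this]
    obtain ⟨w, hw1, hw2⟩ := h _ hopen (Or.inl rfl)
    match w, hw1 with
    | none, _ => exact absurd hw2 hA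
    | some z, Or.inl h1 => exact absurd h1 (by simp)
    | some z, Or.inr h1 => exact ⟨z, (Option.some_injective X).mem_set_image.1 h1, hw2⟩
  · intro h U hU hnU
    obtain ⟨z, hz1, hz2⟩ := h _ ((filterTop_isOpen_iff p U).1 hU hnU)
    exact ⟨some z, hz1, hz2⟩

/-! ### weak orderability -/

lemma wOBy (hκ : Cardinal.aleph0 ≤ κ) (hlam : Cardinal.aleph0 ≤ lam) :
    WOBy (filterTop (pF κ lam μ hκ hlam)) (rZ κ lam μ) := by
  have hle : filterTop (pF κ lam μ hκ hlam) ≤ TopologicalSpace.generateFrom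
      {S : Set (Option (ZT κ lam μ)) |
        ∃ a, S = {z | (rZ κ lam μ).lt z a} ∨ S = {z | (rZ κ lam μ).lt a z}} := by
    apply le_generateFrom
    rintro S ⟨a, rfl | rfl⟩
    · -- S = {z | z < a}
      show (filterTop (pF κ lam μ hκ hlam)).IsOpen _
      rw [filterTop_isOpen_iff]
      intro hnone
      have hnone' : emb (none : Option (ZT κ lam μ)) < emb a := hnone
      match a with
      | none => exact absurd hnone' (lt_irrefl _)
      | some (Sum.inl x) => exact absurd hnone' (not_lt_none_A x)
      | some (Sum.inr b) =>
        rw [mem_pF]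
        constructor
        · have : badK (κ := κ) (lam := lam) (μ := μ)
              (Option.some ⁻¹' {z | (rZ κ lam μ).lt z (some (Sum.inr b))}) = ∅ := by
            ext k
            simp only [badK, Set.mem_setOf_eq, Set.mem_empty_iff_false, iff_false, not_exists]
            intro n h
            exact h (lt_A_B _ _)
          rw [this]
          simpa using Cardinal.aleph0_pos.trans_le hκ
        · exact ⟨b, fun s hs => (lt_B_B (κ := κ) (μ := μ)).2 hs⟩
    · -- S = {z | a < z}
      show (filterTop (pF κ lam μ hκ hlam)).IsOpen _
      rw [filterTop_isOpen_iff]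
      intro hnone
      have hnone' : emb a < emb (none : Option (ZT κ lam μ)) := hnone
      match a with
      | none => exact absurd hnone' (lt_irrefl _)
      | some (Sum.inr b) => exact absurd hnone' (not_lt_B_none b)
      | some (Sum.inl x) =>
        rw [mem_pF]
        constructor
        · have hsub : badK (κ := κ) (lam := lam) (μ := μ)
              (Option.some ⁻¹' {z | (rZ κ lam μ).lt (some (Sum.inl x)) z}) ⊆
              {k | ¬ toLex x.1 < toLex (Sum.inr k : JT μ ⊕ KT κ)} := by
            rintro k ⟨n, hn⟩ hk
            exact hn (show emb (some (Sum.inl x)) <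
                emb (some (Sum.inl ((Sum.inr k : JT μ ⊕ KT κ), n)) : Option (ZT κ lam μ)) from
              lt_A_A.2 (embA_lt_iff.2 (Or.inl hk)))
          refine lt_of_le_of_lt (Cardinal.mk_le_mk_of_subset hsub) ?_
          match hx : x.1 with
          | Sum.inl j =>
            have : {k : KT κ | ¬ toLex (Sum.inl j : JT μ ⊕ KT κ) < toLex (Sum.inr k)} = ∅ := by
              ext k
              simp only [Set.mem_setOf_eq, Set.mem_empty_iff_false, iff_false, not_not]
              exact Sum.Lex.inl_lt_inr _ _
            rw [this]
            simpa using Cardinal.aleph0_pos.trans_le hκ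
          | Sum.inr k0 =>
            have hsub2 : {k : KT κ | ¬ toLex (Sum.inr k0 : JT μ ⊕ KT κ) < toLex (Sum.inr k)} ⊆
                Set.Iic k0 := by
              intro k hk
              rw [Set.mem_setOf_eq, Sum.Lex.inr_lt_inr_iff] at hk
              exact not_lt.1 hk
            exact lt_of_le_of_lt (Cardinal.mk_le_mk_of_subset hsub2) (mk_Iic_lt hκ k0)
        · obtain ⟨t0⟩ := toType_ne hlam
          refine ⟨(t0, ULift.up 0), fun s _ => ?_⟩
          show emb (some (Sum.inl x)) < emb (some (Sum.inr s))
          exact lt_A_B x s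
  intro S hS
  exact (TopologicalSpace.le_def.1 hle) S hS

/-! ### cardinalities -/

lemma mk_IZ : #(IZ : Type u) = Cardinal.aleph0 := by
  simp [IZ]

lemma mk_KIZ (hκ : Cardinal.aleph0 ≤ κ) : #(KT κ × IZ) = κ := by
  rw [Cardinal.mk_prod, Cardinal.lift_id, Cardinal.lift_id, mk_IZ, Cardinal.mk_ord_toType]
  exact Cardinal.mul_eq_left hκ hκ Cardinal.aleph0_ne_zero |>.symm ▸
    (Cardinal.mul_eq_left hκ hκ Cardinal.aleph0_ne_zero)

lemma mk_BT (hlam : Cardinal.aleph0 ≤ lam) : #(BT lam) = lam := by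
  rw [show (BT lam) = (LT' lam × IZ) from rfl, Cardinal.mk_prod, Cardinal.lift_id,
    Cardinal.lift_id, mk_IZ, Cardinal.mk_ord_toType]
  exact Cardinal.mul_eq_left hlam hlam Cardinal.aleph0_ne_zero

/-! ### the approaching number -/

lemma aNum_eq (hκ : Cardinal.aleph0 ≤ κ) (hlam : Cardinal.aleph0 ≤ lam)
    (hreg : lam.ord.cof = lam) (h1 : κ ≤ lam) :
    aNum (filterTop (pF κ lam μ hκ hlam)) (none : Option (ZT κ lam μ)) = κ := by
  have hwit : ∃ A : Set (Option (ZT κ lam μ)), none ∉ A ∧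
      none ∈ @closure _ (filterTop (pF κ lam μ hκ hlam)) A ∧ κ = #A := by
    refine ⟨Option.some '' (Set.range (gK (κ := κ) (lam := lam) (μ := μ))), by simp, ?_, ?_⟩
    · rw [none_mem_closure_iff _ _ (by simp)]
      intro P hP
      rw [mem_pF] at hP
      obtain ⟨hbad, -⟩ := hP
      have hx : ∃ x : KT κ × IZ, gK (lam := lam) (μ := μ) x ∈ P := by
        by_contra hcon
        push_neg at hcon
        have huniv : badK (κ := κ) (lam := lam) (μ := μ) P = Set.univ := by
          ext k; simp only [badK, Set.mem_setOf_eq, Set.mem_univ, iff_true]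
          exact ⟨ULift.up 0, hcon _⟩
        rw [huniv, Cardinal.mk_univ, Cardinal.mk_ord_toType] at hbad
        exact absurd hbad (lt_irrefl _)
      obtain ⟨x, hx⟩ := hx
      exact ⟨gK x, hx, ⟨gK x, ⟨x, rfl⟩, rfl⟩⟩
    · rw [Cardinal.mk_image_eq (Option.some_injective _),
        Cardinal.mk_range_eq _ (gK_inj (κ := κ) (lam := lam) (μ := μ)), mk_KIZ hκ]
  apply le_antisymm
  · exact csInf_le' hwit
  · apply le_csInf
    · obtain ⟨A, h1', h2', h3'⟩ := hwit
      exact ⟨κ, A, h1', h2', h3'⟩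
    rintro c ⟨A, hA1, hA2, rfl⟩
    by_contra hcon
    push_neg at hcon
    set A' : Set (ZT κ lam μ) := Option.some ⁻¹' A with hA'def
    have hA'le : #A' < κ :=
      lt_of_le_of_lt (Cardinal.mk_preimage_of_injective _ _ (Option.some_injective _)) hcon
    set P : Set (ZT κ lam μ) := {z | some z ∉ A} with hPdef
    have hmem : P ∈ pF κ lam μ hκ hlam := by
      rw [mem_pF]
      constructor
      · have hinj : Function.Injective (fun k : ↥(badK (κ := κ) (lam := lam) (μ := μ) P) =>
            (⟨gK (k.1, k.2.choose), by
              have := k.2.choose_spec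
              simpa [hPdef, hA'def] using this⟩ : ↥A')) := by
          rintro ⟨k1, hk1⟩ ⟨k2, hk2⟩ h
          have h2 := gK_inj (κ := κ) (lam := lam) (μ := μ) (congrArg Subtype.val h)
          exact Subtype.ext (congrArg Prod.fst h2)
        exact lt_of_le_of_lt (Cardinal.mk_le_of_injective hinj) hA'le
      · have hS : #{s : BT lam | Sum.inr s ∈ A'} < lam := by
          refine lt_of_lt_of_le (lt_of_le_of_lt ?_ hA'le) h1
          exact Cardinal.mk_le_of_injective (f := fun s : ↥{s : BT lam | Sum.inr s ∈ A'} =>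
            (⟨Sum.inr s.1, s.2⟩ : ↥A')) (by
              rintro ⟨s1, hs1⟩ ⟨s2, hs2⟩ h
              exact Subtype.ext (Sum.inr.inj (congrArg Subtype.val h)))
        obtain ⟨t, ht⟩ := bdd_B hreg hS
        refine ⟨t, fun s hs => ?_⟩
        intro hmem2
        exact absurd hs (lt_asymm (ht s hmem2))
    obtain ⟨z, hz1, hz2⟩ := (none_mem_closure_iff _ _ hA1).1 hA2 P hmem
    exact hz1 hz2

/-! ### pseudo-character -/

def VK (κ lam μ : Cardinal.{u}) (x : KT κ × IZ) : Set (Option (ZT κ lam μ)) :=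
  {w | w ≠ some (gK (lam := lam) (μ := μ) x)}

def WB (κ lam μ : Cardinal.{u}) (t : BT lam) : Set (Option (ZT κ lam μ)) :=
  {w | w = none ∨ (∃ x : KT κ × IZ, w = some (gK (lam := lam) (μ := μ) x)) ∨
       (∃ s : BT lam, toLex t < toLex s ∧ w = some (Sum.inr s))}

lemma WB_inj : Function.Injective (WB κ lam μ) := by
  intro t1 t2 h
  by_contra hne
  have key : ∀ u v : BT lam, toLex u < toLex v → WB κ lam μ u = WB κ lam μ v → False := by
    intro u v huv heq
    have hmem : some (Sum.inr v) ∈ WB κ lam μ u := Or.inr (Or.inr ⟨v, huv, rfl⟩)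
    rw [heq] at hmem
    rcases hmem with h' | ⟨x, h'⟩ | ⟨s, hs, h'⟩
    · simp at h'
    · simp [gK] at h'
    · have : v = s := Sum.inr.inj (Option.some.inj h')
      rw [← this] at hs
      exact absurd hs (lt_irrefl _)
  rcases lt_trichotomy (toLex t1) (toLex t2) with hlt | heq | hgt
  · exact key t1 t2 hlt h
  · exact hne (toLex.injective heq)
  · exact key t2 t1 hgt h.symm

lemma psiNum_eq (hκ : Cardinal.aleph0 ≤ κ) (hlam : Cardinal.aleph0 ≤ lam)
    (hreg : lam.ord.cof = lam) (h1 : κ ≤ lam) :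
    psiNum (filterTop (pF κ lam μ hκ hlam)) (none : Option (ZT κ lam μ)) = lam := by
  obtain ⟨t0⟩ := toType_ne hlam
  have hwit : ∃ Us : Set (Set (Option (ZT κ lam μ))),
      (∀ V ∈ Us, (filterTop (pF κ lam μ hκ hlam)).IsOpen V) ∧ ⋂₀ Us = {none} ∧ lam = #Us := by
    refine ⟨Set.range (VK κ lam μ) ∪ Set.range (WB κ lam μ), ?_, ?_, ?_⟩
    · rintro V (⟨x, rfl⟩ | ⟨t, rfl⟩)
      · rw [filterTop_isOpen_iff]
        intro _
        rw [mem_pF]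
        constructor
        · have hsub : badK (κ := κ) (lam := lam) (μ := μ) (Option.some ⁻¹' VK κ lam μ x) ⊆
              {x.1} := by
            rintro k ⟨n, hn⟩
            simp only [VK, Set.mem_preimage, Set.mem_setOf_eq, not_not] at hn
            have := gK_inj (κ := κ) (lam := lam) (μ := μ) (Option.some.inj hn)
            exact congrArg Prod.fst this
          refine lt_of_le_of_lt (Cardinal.mk_le_mk_of_subset hsub) ?_
          rw [Cardinal.mk_singleton]
          exact one_lt hκ
        · refine ⟨(t0, ULift.up 0), fun s _ => ?_⟩
          simp only [VK, Set.mem_preimage, Set.mem_setOf_eq]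
          intro hcon
          simp [gK] at hcon
      · rw [filterTop_isOpen_iff]
        intro _
        rw [mem_pF]
        constructor
        · have hempty : badK (κ := κ) (lam := lam) (μ := μ) (Option.some ⁻¹' WB κ lam μ t)
              = ∅ := by
            ext k
            simp only [badK, Set.mem_setOf_eq, Set.mem_empty_iff_false, iff_false, not_exists]
            intro n hn
            exact hn (Or.inr (Or.inl ⟨(k, n), rfl⟩))
          rw [hempty]
          simpa using Cardinal.aleph0_pos.trans_le hκ
        · exact ⟨t, fun s hs => Or.inr (Or.inr ⟨s, hs, rfl⟩)⟩
    · ext w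
      simp only [Set.mem_sInter, Set.mem_singleton_iff]
      constructor
      · intro hw
        match w with
        | none => rfl
        | some (Sum.inl (Sum.inl j, n)) =>
          have := hw _ (Or.inr ⟨(t0, ULift.up 0), rfl⟩)
          rcases this with h' | ⟨x, h'⟩ | ⟨s, _, h'⟩
          · simp at h'
          · have h2 := Sum.inl.inj (Option.some.inj h')
            simp at h2
          · simp at h'
        | some (Sum.inl (Sum.inr k, n)) =>
          have := hw _ (Or.inl ⟨(k, n), rfl⟩)
          exact absurd rfl this
        | some (Sum.inr s) =>
          have := hw _ (Or.inr ⟨s, rfl⟩)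
          rcases this with h' | ⟨x, h'⟩ | ⟨s', hs', h'⟩
          · simp at h'
          · simp [gK] at h'
          · have : s = s' := Sum.inr.inj (Option.some.inj h')
            rw [← this] at hs'
            exact absurd hs' (lt_irrefl _)
      · rintro rfl V hV
        rcases hV with ⟨x, rfl⟩ | ⟨t, rfl⟩
        · exact fun h => by simp at h
        · exact Or.inl rfl
    · apply le_antisymm
      · calc lam = #(Set.range (WB κ lam μ)) := by
              rw [Cardinal.mk_range_eq _ (WB_inj (κ := κ) (lam := lam) (μ := μ)), mk_BT hlam]
          _ ≤ _ := Cardinal.mk_le_mk_of_subset Set.subset_union_right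
      · calc #(Set.range (VK κ lam μ) ∪ Set.range (WB κ lam μ) : Set _)
            ≤ #(Set.range (VK κ lam μ)) + #(Set.range (WB κ lam μ)) := Cardinal.mk_union_le _ _
          _ ≤ #(KT κ × IZ) + #(BT lam) :=
              add_le_add Cardinal.mk_range_le Cardinal.mk_range_le
          _ = κ + lam := by rw [mk_KIZ hκ, mk_BT hlam]
          _ ≤ lam + lam := add_le_add h1 le_rfl
          _ = lam := Cardinal.add_eq_self hlam
  apply le_antisymm
  · obtain ⟨Us, ha, hb, hc⟩ := hwit
    exact csInf_le' ⟨Us, ha, hb, hc⟩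
  · apply le_csInf
    · obtain ⟨Us, ha, hb, hc⟩ := hwit
      exact ⟨lam, Us, ha, hb, hc⟩
    rintro c ⟨Us, hopen, hinter, rfl⟩
    by_contra hcon
    push_neg at hcon
    have hnone : ∀ V ∈ Us, (none : Option (ZT κ lam μ)) ∈ V := by
      intro V hV
      have : (none : Option (ZT κ lam μ)) ∈ ⋂₀ Us := by rw [hinter]; rfl
      exact this V hV
    have htail : ∀ V : ↥Us, ∃ t : BT lam, ∀ s, toLex t < toLex s →
        Sum.inr s ∈ Option.some ⁻¹' V.1 := by
      intro V
      have := (mem_pF).1 ((filterTop_isOpen_iff _ _).1 (hopen V.1 V.2) (hnone V.1 V.2))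
      exact this.2
    choose tf htf using htail
    have hS : #(Set.range tf) < lam := lt_of_le_of_lt Cardinal.mk_range_le hcon
    obtain ⟨tstar, htstar⟩ := bdd_B hreg hS
    have hm : some (Sum.inr tstar) ∈ ⋂₀ Us := by
      intro V hV
      exact htf ⟨V, hV⟩ tstar (htstar _ ⟨⟨V, hV⟩, rfl⟩)
    rw [hinter] at hm
    simp at hm

/-! ### full orderability -/

/-- generating rays for `rZ` -/
def gens (κ lam μ : Cardinal.{u}) : Set (Set (Option (ZT κ lam μ))) :=
  {S | ∃ a : Option (ZT κ lam μ),
    S = {z | (rZ κ lam μ).lt z a} ∨ S = {z | (rZ κ lam μ).lt a z}}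

lemma genOpen_union {X : Type u} {g : Set (Set X)} {A B : Set X}
    (hA : TopologicalSpace.GenerateOpen g A) (hB : TopologicalSpace.GenerateOpen g B) :
    TopologicalSpace.GenerateOpen g (A ∪ B) := by
  rw [← Set.sUnion_pair]
  exact .sUnion _ (by rintro V (rfl | rfl) <;> assumption)

lemma isolated (z : ZT κ lam μ) :
    TopologicalSpace.GenerateOpen (gens κ lam μ) {some z} := by
  match z with
  | Sum.inl (x1, n) =>
    have key : {w | (rZ κ lam μ).lt (some (Sum.inl (x1, ULift.up (n.down - 1)))) w} ∩
        {w | (rZ κ lam μ).lt w (some (Sum.inl (x1, ULift.up (n.down + 1))))} =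
        {some (Sum.inl (x1, n))} := by
      ext w
      constructor
      · rintro ⟨h1, h2⟩
        match w with
        | none => exact absurd (h2 : emb _ < emb _) (not_lt_none_A _)
        | some (Sum.inr s) => exact absurd (h2 : emb _ < emb _) (not_lt_B_A _ _)
        | some (Sum.inl (y1, m)) =>
          have h1' := embA_lt_iff.1 (lt_A_A.1 (h1 : emb _ < emb _))
          have h2' := embA_lt_iff.1 (lt_A_A.1 (h2 : emb _ < emb _))
          simp only [Set.mem_singleton_iff, Option.some.injEq, Sum.inl.injEq, Prod.mk.injEq]
          rcases h1' with ha | ⟨ha, ha2⟩ <;> rcases h2' with hb | ⟨hb, hb2⟩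
          · exact absurd ha (lt_asymm hb)
          · rw [hb] at ha; exact absurd ha (lt_irrefl _)
          · rw [ha] at hb; exact absurd hb (lt_irrefl _)
          · have hm1 : n.down - 1 < m.down := ha2
            have hm2 : m.down < n.down + 1 := hb2
            exact ⟨ha.symm, ULift.down_injective (by omega)⟩
      · rintro rfl
        constructor
        · exact lt_A_A.2 (embA_lt_iff.2 (Or.inr ⟨rfl, show n.down - 1 < n.down by omega⟩))
        · exact lt_A_A.2 (embA_lt_iff.2 (Or.inr ⟨rfl, show n.down < n.down + 1 by omega⟩))
    rw [← key]
    exact .inter _ _ (.basic _ ⟨_, Or.inr rfl⟩) (.basic _ ⟨_, Or.inl rfl⟩)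
  | Sum.inr (s1, n) =>
    have key : {w | (rZ κ lam μ).lt (some (Sum.inr (s1, ULift.up (n.down + 1)))) w} ∩
        {w | (rZ κ lam μ).lt w (some (Sum.inr (s1, ULift.up (n.down - 1))))} =
        {some (Sum.inr (s1, n))} := by
      ext w
      constructor
      · rintro ⟨h1, h2⟩
        match w with
        | none => exact absurd (h1 : emb _ < emb _) (not_lt_B_none _)
        | some (Sum.inl y) => exact absurd (h1 : emb _ < emb _) (not_lt_B_A _ _)
        | some (Sum.inr (y1, m)) =>
          have h1' := Prod.Lex.lt_iff.1 (lt_B_B.1 (h1 : emb _ < emb _))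
          have h2' := Prod.Lex.lt_iff.1 (lt_B_B.1 (h2 : emb _ < emb _))
          simp only [Set.mem_singleton_iff, Option.some.injEq, Sum.inr.injEq, Prod.mk.injEq]
          rcases h1' with ha | ⟨ha, ha2⟩ <;> rcases h2' with hb | ⟨hb, hb2⟩
          · exact absurd ha (lt_asymm hb)
          · simp only [ofLex_toLex] at ha hb; rw [hb] at ha; exact absurd ha (lt_irrefl _)
          · rw [ha] at hb; exact absurd hb (lt_irrefl _)
          · have hm1 : m.down < n.down + 1 := ha2
            have hm2 : n.down - 1 < m.down := hb2
            exact ⟨ha, ULift.down_injective (by omega)⟩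
      · rintro rfl
        constructor
        · exact lt_B_B.2 (Prod.Lex.lt_iff.2 (Or.inr ⟨rfl, show n.down < n.down + 1 by omega⟩))
        · exact lt_B_B.2 (Prod.Lex.lt_iff.2 (Or.inr ⟨rfl, show n.down - 1 < n.down by omega⟩))
    rw [← key]
    exact .inter _ _ (.basic _ ⟨_, Or.inr rfl⟩) (.basic _ ⟨_, Or.inl rfl⟩)

lemma sing_union (U : Set (Option (ZT κ lam μ))) :
    TopologicalSpace.GenerateOpen (gens κ lam μ) (U \ {none}) := by
  have heq : U \ {none} =
      Set.sUnion {V : Set (Option (ZT κ lam μ)) | ∃ z : ZT κ lam μ, V = {some z} ∧ some z ∈ U} := by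
    ext w
    constructor
    · rintro ⟨hw, hne⟩
      match w with
      | none => exact absurd rfl hne
      | some z => exact ⟨{some z}, ⟨z, rfl, hw⟩, rfl⟩
    · rintro ⟨V, ⟨z, rfl, hz⟩, hw⟩
      rw [Set.mem_singleton_iff] at hw
      subst hw
      exact ⟨hz, by simp⟩
  rw [heq]
  exact .sUnion _ (by rintro V ⟨z, rfl, hz⟩; exact isolated z)

lemma ordTop_eq (hκ : Cardinal.aleph0 ≤ κ) (hlam : Cardinal.aleph0 ≤ lam)
    (hregκ : κ.ord.cof = κ) (hreg : lam.ord.cof = lam) :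
    ordTop (rZ κ lam μ) = filterTop (pF κ lam μ hκ hlam) := by
  apply le_antisymm
  · -- every filterTop-open set is ordTop-open
    rw [TopologicalSpace.le_def]
    intro U hU
    show TopologicalSpace.GenerateOpen (gens κ lam μ) U
    by_cases hn : (none : Option (ZT κ lam μ)) ∈ U
    · obtain ⟨hbad, t, htail⟩ := (mem_pF).1 ((filterTop_isOpen_iff _ _).1 hU hn)
      obtain ⟨k0, hk0⟩ := bdd_lt hregκ hbad
      set aPt : Option (ZT κ lam μ) :=
        some (Sum.inl ((Sum.inr k0 : JT μ ⊕ KT κ), ULift.up 0)) with haPt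
      set I : Set (Option (ZT κ lam μ)) :=
        {w | (rZ κ lam μ).lt aPt w} ∩ {w | (rZ κ lam μ).lt w (some (Sum.inr t))} with hI
      have hIopen : TopologicalSpace.GenerateOpen (gens κ lam μ) I :=
        .inter _ _ (.basic _ ⟨_, Or.inr rfl⟩) (.basic _ ⟨_, Or.inl rfl⟩)
      have hIsub : I ⊆ U := by
        rintro w ⟨h1, h2⟩
        match w with
        | none => exact hn
        | some (Sum.inr s) =>
          have := lt_B_B.1 (h2 : emb _ < emb _)
          exact htail s this
        | some (Sum.inl (y1, m)) =>
          have h1' := embA_lt_iff.1 (lt_A_A.1 (h1 : emb _ < emb _))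
          have hy : ∃ k : KT κ, y1 = Sum.inr k ∧ ¬ k < k0 := by
            rcases h1' with ha | ⟨ha, _⟩
            · match y1 with
              | Sum.inl j => exact absurd ha Sum.lex_inr_inl
              | Sum.inr k =>
                refine ⟨k, rfl, ?_⟩
                have : k0 < k := (Sum.Lex.inr_lt_inr_iff).1 ha
                exact fun h => absurd this (lt_asymm h)
            · exact ⟨k0, ha.symm, lt_irrefl _⟩
          obtain ⟨k, rfl, hk⟩ := hy
          have hnotbad : k ∉ badK (κ := κ) (lam := lam) (μ := μ) (Option.some ⁻¹' U) :=
            fun hb => hk (hk0 _ hb)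
          simp only [badK, Set.mem_setOf_eq, not_exists, not_not] at hnotbad
          exact hnotbad m
      have hUeq : U = (U \ {none}) ∪ I := by
        apply Set.eq_of_subset_of_subset
        · intro w hw
          by_cases hwn : w = none
          · subst hwn
            refine Or.inr ⟨lt_A_none _, lt_none_B _⟩
          · exact Or.inl ⟨hw, hwn⟩
        · rintro w (⟨hw, -⟩ | hw)
          · exact hw
          · exact hIsub hw
      rw [hUeq]
      exact genOpen_union (sing_union U) hIopen
    · have : U = U \ {none} := by
        ext w
        simp only [Set.mem_diff, Set.mem_singleton_iff, iff_self_and]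
        intro hw hwn
        subst hwn
        exact hn hw
      rw [this]
      exact sing_union U
  · rw [TopologicalSpace.le_def]
    intro S hS
    exact wOBy hκ hlam S hS

lemma mk_ZT (hκ : Cardinal.aleph0 ≤ κ) (hμ : Cardinal.aleph0 ≤ μ)
    (h1 : κ ≤ lam) (h2 : lam ≤ μ) : #(ZT κ lam μ) = μ := by
  have hκμ : κ ≤ μ := h1.trans h2
  have h3 : #(JT μ ⊕ KT κ) = μ := by
    rw [Cardinal.mk_sum, Cardinal.lift_id, Cardinal.lift_id,
      Cardinal.mk_ord_toType, Cardinal.mk_ord_toType]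
    exact Cardinal.add_eq_left hμ hκμ
  have h4 : #(AT κ μ) = μ := by
    rw [show (AT κ μ) = ((JT μ ⊕ KT κ) × IZ) from rfl, Cardinal.mk_prod, Cardinal.lift_id,
      Cardinal.lift_id, h3, mk_IZ]
    exact Cardinal.mul_eq_left hμ hμ Cardinal.aleph0_ne_zero
  rw [show (ZT κ lam μ) = (AT κ μ ⊕ BT lam) from rfl, Cardinal.mk_sum, Cardinal.lift_id,
    Cardinal.lift_id, h4, mk_BT (hκ.trans h1)]
  exact Cardinal.add_eq_left hμ h2

end Stmt9

/-- For infinite cardinals `κ ≤ λ ≤ μ` with `λ` regular, there is a set `Z`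
with `|Z| = μ` and a free filter `p` on `Z` with `Z_p` weakly orderable, `a(Z_p) = κ` and
`ψ(Z_p) = λ`. If moreover `κ` is regular, `Z_p` can be chosen orderable. -/
theorem stmt9 (κ lam μ : Cardinal.{u})
    (hκ : Cardinal.aleph0 ≤ κ) (hlam : Cardinal.aleph0 ≤ lam) (hμ : Cardinal.aleph0 ≤ μ)
    (hreg : lam.ord.cof = lam) (h1 : κ ≤ lam) (h2 : lam ≤ μ) :
    (∃ (Z : Type u) (p : Filter Z), Cardinal.mk Z = μ ∧ IsFree p ∧
      WeaklyOrderable (filterTop p) ∧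
      aNum (filterTop p) (none : Option Z) = κ ∧
      psiNum (filterTop p) (none : Option Z) = lam) ∧
    (κ.ord.cof = κ →
      ∃ (Z : Type u) (p : Filter Z), Cardinal.mk Z = μ ∧ IsFree p ∧
        Orderable (filterTop p) ∧
        aNum (filterTop p) (none : Option Z) = κ ∧
        psiNum (filterTop p) (none : Option Z) = lam) := by
  constructor
  · exact ⟨Stmt9.ZT κ lam μ, Stmt9.pF κ lam μ hκ hlam, Stmt9.mk_ZT hκ hμ h1 h2,
      Stmt9.pF_free hκ hlam, ⟨Stmt9.rZ κ lam μ, Stmt9.wOBy hκ hlam⟩,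
      Stmt9.aNum_eq hκ hlam hreg h1, Stmt9.psiNum_eq hκ hlam hreg h1⟩
  · intro hregκ
    exact ⟨Stmt9.ZT κ lam μ, Stmt9.pF κ lam μ hκ hlam, Stmt9.mk_ZT hκ hμ h1 h2,
      Stmt9.pF_free hκ hlam, ⟨Stmt9.rZ κ lam μ, Stmt9.ordTop_eq hκ hlam hregκ hreg⟩,
      Stmt9.aNum_eq hκ hlam hreg h1, Stmt9.psiNum_eq hκ hlam hreg h1⟩
end
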